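/- arXiv:1001.3344 — 3 statements merged into one kernel-verified Lean document; each statement's English description precedes it below -/
import Mathlib

section
/- A priori bound on the solution of a rough differential equation (estimates (2.9) and (2.10)): Let 1/3 < κ < γ ≤ 1, T > 0, let (x, X²) be a γ-rough path over [0,T] with values in ℝ^m, let σ ∈ C³(ℝ^d; ℝ^{d×m}) be bounded with bounded derivatives up to order three, a ∈ ℝ^d, and let y be the unique solution with exponent 3κ of dy = σ(y)dx, y_0 = a. Then there exists a polynomial P : ℝ² → [0,∞) with nonnegative coefficients, depending only on T, σ, γ, κ, d, m, such that for all 0 ≤ s ≤ t ≤ T: |y_t − y_s| ≤ (t−s)^κ P(‖x‖_{γ,∞,T}, ‖X²‖_{2γ}) and |y_t − y_s − σ(y_s)(x_t − x_s)| ≤ (t−s)^{2κ} P(‖x‖_{γ,∞,T}, ‖X²‖_{2γ}), where ‖x‖_{γ,∞,T} = sup_{t∈[0,T]} |x_t| + sup_{s≠t} |x_t − x_s|/|t−s|^γ. -/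
open Set
open scoped ENNReal

noncomputable section

/-- `ℝ^m` with the Euclidean norm. -/
abbrev Vec (m : ℕ) := EuclideanSpace ℝ (Fin m)

/-- `ℝ^{m×m}` with the Euclidean norm. -/
abbrev Mat (m : ℕ) := EuclideanSpace ℝ (Fin m × Fin m)

/-- Sup "norm" `sup_{t ∈ [a,b]} ‖f t‖` as an extended nonnegative real. -/
noncomputable def supENorm {E : Type*} [NormedAddCommGroup E] (a b : ℝ) (f : ℝ → E) : ℝ≥0∞ :=
  ⨆ t : Icc a b, ENNReal.ofReal ‖f t‖

/-- γ-Hölder seminorm `sup_{a ≤ s < t ≤ b} ‖f t - f s‖/(t-s)^γ` as an extended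
nonnegative real. -/
noncomputable def holderENorm {E : Type*} [NormedAddCommGroup E] (γ a b : ℝ) (f : ℝ → E) :
    ℝ≥0∞ :=
  ⨆ p : {p : ℝ × ℝ // a ≤ p.1 ∧ p.1 < p.2 ∧ p.2 ≤ b},
    ENNReal.ofReal (‖f p.1.2 - f p.1.1‖ / (p.1.2 - p.1.1) ^ γ)

/-- Hölder seminorm `sup_{a ≤ s < t ≤ b} ‖X_{st}‖/(t-s)^β` of a two-parameter function,
as an extended nonnegative real. -/
noncomputable def holder2ENorm {E : Type*} [NormedAddCommGroup E] (β a b : ℝ)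
    (X : ℝ → ℝ → E) : ℝ≥0∞ :=
  ⨆ p : {p : ℝ × ℝ // a ≤ p.1 ∧ p.1 < p.2 ∧ p.2 ≤ b},
    ENNReal.ofReal (‖X p.1.1 p.1.2‖ / (p.1.2 - p.1.1) ^ β)

/-- The real-valued γ-Hölder norm `‖f‖_{γ,∞} = sup ‖f‖ + Hölder seminorm` on `[a,b]`. -/
noncomputable def holderInftyNorm {E : Type*} [NormedAddCommGroup E] (γ a b : ℝ)
    (f : ℝ → E) : ℝ :=
  (supENorm a b f + holderENorm γ a b f).toReal

/-- A γ-rough path `(x, X²)` over `[a,b]` with values in `ℝ^m`: `x` has finite γ-Hölder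
seminorm, `X²` is continuous on the simplex with finite 2γ-Hölder seminorm and Chen's
relation holds. -/
def IsRoughPath (m : ℕ) (γ a b : ℝ) (x : ℝ → Vec m) (X2 : ℝ → ℝ → Mat m) : Prop :=
  holderENorm γ a b x < ⊤ ∧
  ContinuousOn (fun p : ℝ × ℝ => X2 p.1 p.2)
    {p : ℝ × ℝ | a ≤ p.1 ∧ p.1 ≤ p.2 ∧ p.2 ≤ b} ∧
  holder2ENorm (2 * γ) a b X2 < ⊤ ∧
  ∀ s u t : ℝ, a ≤ s → s ≤ u → u ≤ t → t ≤ b → ∀ i j : Fin m,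
    X2 s t (i, j) - X2 s u (i, j) - X2 u t (i, j) = (x u i - x s i) * (x t j - x u j)

/-- `σ` is `C³`, bounded with bounded derivatives up to order three. -/
def IsC3Bounded {E F : Type*} [NormedAddCommGroup E] [NormedSpace ℝ E]
    [NormedAddCommGroup F] [NormedSpace ℝ F] (σ : E → F) : Prop :=
  ContDiff ℝ 3 σ ∧ ∀ n : ℕ, n ≤ 3 → ∃ B : ℝ, ∀ z : E, ‖iteratedFDeriv ℝ n σ z‖ ≤ B

/-- The vector field `D^{(i)}σ^{(j)} = ∑_l σ^{(i)}_l ∂_l σ^{(j)}`, i.e. the derivative of the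
`j`-th column of `σ` in the direction of the `i`-th column. -/
noncomputable def Dvf (d m : ℕ) (σ : Vec d → Vec m →L[ℝ] Vec d) (i j : Fin m)
    (z : Vec d) : Vec d :=
  fderiv ℝ (fun w => σ w (EuclideanSpace.single j (1 : ℝ))) z
    (σ z (EuclideanSpace.single i (1 : ℝ)))

/-- `y` is a solution, with exponent `θ`, of the rough differential equation `dy = σ(y)dx`,
`y_0 = a`, on `[0,T]` (Davie's formulation). -/
def IsRDESolution (d m : ℕ) (θ T : ℝ) (σ : Vec d → Vec m →L[ℝ] Vec d) (x : ℝ → Vec m)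
    (X2 : ℝ → ℝ → Mat m) (a : Vec d) (y : ℝ → Vec d) : Prop :=
  ContinuousOn y (Icc 0 T) ∧ y 0 = a ∧
  ∃ C : ℝ, ∀ s t : ℝ, 0 ≤ s → s ≤ t → t ≤ T →
    ‖y t - y s - σ (y s) (x t - x s) -
        ∑ i : Fin m, ∑ j : Fin m, X2 s t (i, j) • Dvf d m σ i j (y s)‖
      ≤ C * (t - s) ^ θ


/- ### Auxiliary lemmas -/

lemma abs_coord_le {ι : Type*} [Fintype ι] (v : EuclideanSpace ℝ ι) (k : ι) : |v k| ≤ ‖v‖ := by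
  rw [EuclideanSpace.norm_eq]
  have h1 : |v k| = Real.sqrt (‖v k‖ ^ 2) := by
    rw [Real.sqrt_sq_eq_abs]; simp [Real.norm_eq_abs, abs_abs]
  rw [h1]
  apply Real.sqrt_le_sqrt
  exact Finset.single_le_sum (f := fun i => ‖v i‖ ^ 2) (fun i _ => by positivity) (Finset.mem_univ k)

lemma euclid_sum_single {m : ℕ} (v : Vec m) :
    ∑ i : Fin m, v i • EuclideanSpace.single i (1 : ℝ) = v := by
  ext j
  rw [WithLp.ofLp_sum, Finset.sum_apply]
  have h : ∀ i : Fin m, (v i • EuclideanSpace.single i (1:ℝ)) j = if j = i then v i else 0 := by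
    intro i; simp [EuclideanSpace.single_apply]
  simp only [h]
  simp

lemma clm_apply_decomp {m d : ℕ} (f : Vec m →L[ℝ] Vec d) (v : Vec m) :
    f v = ∑ i : Fin m, v i • f (EuclideanSpace.single i (1:ℝ)) := by
  conv_lhs => rw [← euclid_sum_single v]
  rw [map_sum]
  simp

lemma Dvf_eq {d m : ℕ} (σ : Vec d → Vec m →L[ℝ] Vec d) (hσ : Differentiable ℝ σ)
    (i j : Fin m) (z : Vec d) :
    Dvf d m σ i j z
      = (fderiv ℝ σ z (σ z (EuclideanSpace.single i (1:ℝ)))) (EuclideanSpace.single j (1:ℝ)) := by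
  unfold Dvf
  have h : (fun w => σ w (EuclideanSpace.single j (1:ℝ)))
      = (ContinuousLinearMap.apply ℝ (Vec d) (EuclideanSpace.single j (1:ℝ))) ∘ σ := rfl
  rw [h, fderiv_comp z (ContinuousLinearMap.apply ℝ (Vec d) _).differentiableAt (hσ z),
    (ContinuousLinearMap.apply ℝ (Vec d) (EuclideanSpace.single j (1:ℝ))).fderiv]
  rfl

lemma norm_fderiv_eq_iterated {E F : Type*} [NormedAddCommGroup E] [NormedSpace ℝ E]
    [NormedAddCommGroup F] [NormedSpace ℝ F] (g : E → F) (z : E) :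
    ‖fderiv ℝ g z‖ = ‖iteratedFDeriv ℝ 1 g z‖ := by
  rw [← norm_iteratedFDeriv_fderiv, norm_iteratedFDeriv_zero]

lemma sigma_bounds {E F : Type*} [NormedAddCommGroup E] [NormedSpace ℝ E]
    [NormedAddCommGroup F] [NormedSpace ℝ F] {σ : E → F} (hσ : IsC3Bounded σ) :
    ∃ M : ℝ, 1 ≤ M ∧ (∀ z, ‖σ z‖ ≤ M) ∧ (∀ z, ‖fderiv ℝ σ z‖ ≤ M) ∧
      (∀ z w, ‖fderiv ℝ σ z - fderiv ℝ σ w‖ ≤ M * ‖z - w‖) ∧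
      (∀ z w, ‖σ w - σ z - fderiv ℝ σ z (w - z)‖ ≤ M * ‖w - z‖ ^ 2) := by
  obtain ⟨hC, hB⟩ := hσ
  obtain ⟨B0, hB0⟩ := hB 0 (by norm_num)
  obtain ⟨B1, hB1⟩ := hB 1 (by norm_num)
  obtain ⟨B2, hB2⟩ := hB 2 (by norm_num)
  refine ⟨1 + |B0| + |B1| + |B2|,
    by linarith [abs_nonneg B0, abs_nonneg B1, abs_nonneg B2], ?_, ?_, ?_, ?_⟩
  · intro z
    have h1 := hB0 z
    rw [norm_iteratedFDeriv_zero] at h1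
    have h2 : B0 ≤ |B0| := le_abs_self B0
    linarith [abs_nonneg B0, abs_nonneg B1, abs_nonneg B2]
  · intro z
    have h1 := hB1 z
    rw [← norm_iteratedFDeriv_fderiv, norm_iteratedFDeriv_zero] at h1
    have h2 : B1 ≤ |B1| := le_abs_self B1
    linarith [abs_nonneg B0, abs_nonneg B1, abs_nonneg B2]
  · have hd : Differentiable ℝ (fderiv ℝ σ) := by
      have h3 : ContDiff ℝ 2 (fderiv ℝ σ) := (hC.fderiv_right (by norm_num))
      exact h3.differentiable (by norm_num)
    have hlip : ∀ u, ‖fderiv ℝ (fderiv ℝ σ) u‖ ≤ |B2| := by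
      intro u
      rw [norm_fderiv_eq_iterated, norm_iteratedFDeriv_fderiv]
      exact (hB2 u).trans (le_abs_self B2)
    intro z w
    have h4 := Convex.norm_image_sub_le_of_norm_fderiv_le (f := fderiv ℝ σ) (C := |B2|)
      (s := univ) (fun u _ => (hd u)) (fun u _ => hlip u) convex_univ (mem_univ w) (mem_univ z)
    have hn : (0:ℝ) ≤ ‖z - w‖ := norm_nonneg _
    nlinarith [abs_nonneg B0, abs_nonneg B1, abs_nonneg B2]
  · intro z w
    set M2 := |B2| with hM2
    have hd : Differentiable ℝ σ := hC.differentiable (by norm_num)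
    have hd2 : Differentiable ℝ (fderiv ℝ σ) :=
      (hC.fderiv_right (m := 2) (by norm_num)).differentiable (by norm_num)
    have hlip : ∀ u v : E, ‖fderiv ℝ σ u - fderiv ℝ σ v‖ ≤ M2 * ‖u - v‖ := by
      intro u v
      have hlipd : ∀ u, ‖fderiv ℝ (fderiv ℝ σ) u‖ ≤ M2 := by
        intro u
        rw [norm_fderiv_eq_iterated, norm_iteratedFDeriv_fderiv]
        exact (hB2 u).trans (le_abs_self B2)
      exact Convex.norm_image_sub_le_of_norm_fderiv_le (f := fderiv ℝ σ) (C := M2)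
        (s := univ) (fun a _ => hd2 a) (fun a _ => hlipd a) convex_univ (mem_univ v) (mem_univ u)
    set g : E → F := fun u => σ u - fderiv ℝ σ z u with hg
    have hgd : ∀ u, DifferentiableAt ℝ g u := fun u =>
      (hd u).sub ((fderiv ℝ σ z).differentiableAt)
    have hgderiv : ∀ u, fderiv ℝ g u = fderiv ℝ σ u - fderiv ℝ σ z := by
      intro u
      rw [hg]
      rw [fderiv_fun_sub (hd u) ((fderiv ℝ σ z).differentiableAt), (fderiv ℝ σ z).fderiv]
    have hseg : ∀ u ∈ segment ℝ z w, ‖fderiv ℝ g u‖ ≤ M2 * ‖w - z‖ := by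
      intro u hu
      rw [hgderiv u]
      refine (hlip u z).trans ?_
      have h5 : ‖u - z‖ ≤ ‖w - z‖ := by
        rw [segment_eq_image'] at hu
        obtain ⟨t, ⟨ht0, ht1⟩, rfl⟩ := hu
        simp only [add_sub_cancel_left]
        rw [norm_smul, Real.norm_eq_abs, abs_of_nonneg ht0]
        nlinarith [norm_nonneg (w - z)]
      nlinarith [abs_nonneg B2]
    have key := Convex.norm_image_sub_le_of_norm_fderiv_le (f := g) (C := M2 * ‖w - z‖)
      (s := segment ℝ z w) (fun u _ => hgd u) hseg (convex_segment z w)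
      (left_mem_segment ℝ z w) (right_mem_segment ℝ z w)
    have hgid : g w - g z = σ w - σ z - fderiv ℝ σ z (w - z) := by
      rw [hg]; simp only [map_sub]; abel
    rw [hgid] at key
    have h6 : M2 * ‖w - z‖ * ‖w - z‖ ≤ (1 + |B0| + |B1| + |B2|) * ‖w - z‖ ^ 2 := by
      nlinarith [norm_nonneg (w - z), abs_nonneg B0, abs_nonneg B1, abs_nonneg B2]
    linarith

lemma holder_le_of_fin {E : Type*} [NormedAddCommGroup E] {γ a b : ℝ} {f : ℝ → E}
    (hfin : holderENorm γ a b f ≠ ⊤) {s t : ℝ} (hs : a ≤ s) (hst : s < t) (ht : t ≤ b) :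
    ‖f t - f s‖ ≤ (holderENorm γ a b f).toReal * (t - s) ^ γ := by
  have hle : ENNReal.ofReal (‖f t - f s‖ / (t - s) ^ γ) ≤ holderENorm γ a b f :=
    le_iSup (fun p : {p : ℝ × ℝ // a ≤ p.1 ∧ p.1 < p.2 ∧ p.2 ≤ b} =>
      ENNReal.ofReal (‖f p.1.2 - f p.1.1‖ / (p.1.2 - p.1.1) ^ γ)) ⟨(s, t), hs, hst, ht⟩
  have h2 := ENNReal.toReal_mono hfin hle
  have hpos : (0:ℝ) < (t - s) ^ γ := Real.rpow_pos_of_pos (by linarith) γ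
  rw [ENNReal.toReal_ofReal (by positivity)] at h2
  rw [div_le_iff₀ hpos] at h2
  linarith [h2]

lemma holder2_le_of_fin {E : Type*} [NormedAddCommGroup E] {β a b : ℝ} {X : ℝ → ℝ → E}
    (hfin : holder2ENorm β a b X ≠ ⊤) {s t : ℝ} (hs : a ≤ s) (hst : s < t) (ht : t ≤ b) :
    ‖X s t‖ ≤ (holder2ENorm β a b X).toReal * (t - s) ^ β := by
  have hle : ENNReal.ofReal (‖X s t‖ / (t - s) ^ β) ≤ holder2ENorm β a b X :=
    le_iSup (fun p : {p : ℝ × ℝ // a ≤ p.1 ∧ p.1 < p.2 ∧ p.2 ≤ b} =>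
      ENNReal.ofReal (‖X p.1.1 p.1.2‖ / (p.1.2 - p.1.1) ^ β)) ⟨(s, t), hs, hst, ht⟩
  have h2 := ENNReal.toReal_mono hfin hle
  have hpos : (0:ℝ) < (t - s) ^ β := Real.rpow_pos_of_pos (by linarith) β
  rw [ENNReal.toReal_ofReal (by positivity)] at h2
  rw [div_le_iff₀ hpos] at h2
  linarith [h2]

lemma holderInfty_facts {E : Type*} [NormedAddCommGroup E] {γ T : ℝ} {f : ℝ → E}
    (hγ : 0 < γ) (hT : 0 < T) (hfin : holderENorm γ 0 T f ≠ ⊤) :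
    (holderENorm γ 0 T f).toReal ≤ holderInftyNorm γ 0 T f ∧
      0 ≤ holderInftyNorm γ 0 T f := by
  set Kx := (holderENorm γ 0 T f).toReal with hKx
  have hKx0 : 0 ≤ Kx := ENNReal.toReal_nonneg
  have hsupfin : supENorm 0 T f ≠ ⊤ := by
    have hb : supENorm 0 T f ≤ ENNReal.ofReal (‖f 0‖ + Kx * T ^ γ) := by
      refine iSup_le ?_
      rintro ⟨t, ht0, htT⟩
      refine ENNReal.ofReal_le_ofReal ?_
      show ‖f t‖ ≤ ‖f 0‖ + Kx * T ^ γ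
      rcases eq_or_lt_of_le ht0 with h | h
      · have h5 : (0:ℝ) ≤ Kx * T ^ γ := by positivity
        rw [← h]; linarith
      · have h1 : ‖f t - f 0‖ ≤ Kx * (t - 0) ^ γ := holder_le_of_fin hfin le_rfl h htT
        have h2 : ‖f t‖ ≤ ‖f 0‖ + ‖f t - f 0‖ := by
          have h6 := norm_add_le (f 0) (f t - f 0)
          have h7 : f 0 + (f t - f 0) = f t := by abel
          rw [h7] at h6; exact h6
        have h3 : (t - 0) ^ γ ≤ T ^ γ := by
          apply Real.rpow_le_rpow (by linarith) (by linarith) (le_of_lt hγ)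
        have h4 : Kx * (t - 0) ^ γ ≤ Kx * T ^ γ := by nlinarith
        linarith
    exact ne_top_of_le_ne_top ENNReal.ofReal_ne_top hb
  have heq : holderInftyNorm γ 0 T f = (supENorm 0 T f).toReal + Kx := by
    rw [holderInftyNorm, ENNReal.toReal_add hsupfin hfin]
  constructor
  · rw [heq]; linarith [ENNReal.toReal_nonneg (a := supENorm 0 T f)]
  · rw [heq]; linarith [ENNReal.toReal_nonneg (a := supENorm 0 T f)]

lemma sum_smul_bound {d m : ℕ} (W : Mat m) (Dv : Fin m → Fin m → Vec d) (MB bX : ℝ)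
    (hD : ∀ i j, ‖Dv i j‖ ≤ MB) (hW : ∀ i j, |W (i,j)| ≤ bX) (hbX : 0 ≤ bX) :
    ‖∑ i : Fin m, ∑ j : Fin m, W (i,j) • Dv i j‖ ≤ m^2 * bX * MB := by
  calc ‖∑ i : Fin m, ∑ j : Fin m, W (i,j) • Dv i j‖
      ≤ ∑ i : Fin m, ∑ j : Fin m, ‖W (i,j) • Dv i j‖ :=
        (norm_sum_le _ _).trans (Finset.sum_le_sum fun i _ => norm_sum_le _ _)
    _ ≤ ∑ _i : Fin m, ∑ _j : Fin m, bX * MB := by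
        refine Finset.sum_le_sum fun i _ => Finset.sum_le_sum fun j _ => ?_
        rw [norm_smul, Real.norm_eq_abs]
        exact mul_le_mul (hW i j) (hD i j) (norm_nonneg _) hbX
    _ = m^2 * bX * MB := by
        simp [Finset.sum_const, Finset.card_univ]
        ring


set_option maxHeartbeats 1000000

/-- **A priori bounds for solutions of rough differential equations.** There is a polynomial
`P` in two variables with nonnegative coefficients, depending only on `T, σ, γ, κ, d, m`,
with `|y_t - y_s| ≤ (t-s)^κ P(‖x‖_{γ,∞,T}, ‖X²‖_{2γ})` and
`|y_t - y_s - σ(y_s)(x_t - x_s)| ≤ (t-s)^{2κ} P(‖x‖_{γ,∞,T}, ‖X²‖_{2γ})`. -/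
theorem rde_apriori_bounds (d m : ℕ) (κ γ T : ℝ)
    (hκ : 1 / 3 < κ) (hκγ : κ < γ) (hγ : γ ≤ 1) (hT : 0 < T)
    (σ : Vec d → Vec m →L[ℝ] Vec d) (hσ : IsC3Bounded σ) :
    ∃ (N : ℕ) (c : ℕ → ℕ → ℝ), (∀ i j, 0 ≤ c i j) ∧
      ∀ (x : ℝ → Vec m) (X2 : ℝ → ℝ → Mat m) (a : Vec d) (y : ℝ → Vec d),
        IsRoughPath m γ 0 T x X2 →
        IsRDESolution d m (3 * κ) T σ x X2 a y →
        ∀ s t : ℝ, 0 ≤ s → s ≤ t → t ≤ T →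
          ‖y t - y s‖ ≤
            (t - s) ^ κ *
              ∑ i ∈ Finset.range N, ∑ j ∈ Finset.range N,
                c i j * (holderInftyNorm γ 0 T x) ^ i *
                  ((holder2ENorm (2 * γ) 0 T X2).toReal) ^ j ∧
          ‖y t - y s - σ (y s) (x t - x s)‖ ≤
            (t - s) ^ (2 * κ) *
              ∑ i ∈ Finset.range N, ∑ j ∈ Finset.range N,
                c i j * (holderInftyNorm γ 0 T x) ^ i *
                  ((holder2ENorm (2 * γ) 0 T X2).toReal) ^ j := by
  classical
  obtain ⟨hC3, hBnd⟩ := id hσ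
  obtain ⟨M, hM1, hMσ, hMf, hMlip, hMtay⟩ := sigma_bounds hσ
  have hdσ : Differentiable ℝ σ := hC3.differentiable (by norm_num)
  have hM0 : (0:ℝ) < M := by linarith
  have hσlip : ∀ z w : Vec d, ‖σ z - σ w‖ ≤ M * ‖z - w‖ := fun z w =>
    Convex.norm_image_sub_le_of_norm_fderiv_le (fun u _ => hdσ u) (fun u _ => hMf u)
      convex_univ (mem_univ w) (mem_univ z)
  set MD : ℝ := 2 * M^2 with hMDdef
  have hMD0 : 0 < MD := by rw [hMDdef]; positivity
  have hMD1 : M^2 ≤ MD := by rw [hMDdef]; linarith only [sq_nonneg M]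
  -- bounds on the vector fields Dvf
  have hDb : ∀ (i j : Fin m) (z : Vec d), ‖Dvf d m σ i j z‖ ≤ MD := by
    intro i j z
    rw [Dvf_eq σ hdσ]
    have h1 := (fderiv ℝ σ z (σ z (EuclideanSpace.single i (1:ℝ)))).le_opNorm
      (EuclideanSpace.single j (1:ℝ))
    have h2 := (fderiv ℝ σ z).le_opNorm (σ z (EuclideanSpace.single i (1:ℝ)))
    have h3 := (σ z).le_opNorm (EuclideanSpace.single i (1:ℝ))
    rw [EuclideanSpace.norm_single, norm_one, mul_one] at h1 h3
    have h4 := hMf z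
    have h5 := hMσ z
    have h6 : (0:ℝ) ≤ ‖σ z (EuclideanSpace.single i (1:ℝ))‖ := norm_nonneg _
    have h7 : (0:ℝ) ≤ ‖fderiv ℝ σ z‖ := ContinuousLinearMap.opNorm_nonneg _
    have h8 : (0:ℝ) ≤ ‖σ z‖ := norm_nonneg _
    have h9 : ‖σ z (EuclideanSpace.single i (1:ℝ))‖ ≤ M := le_trans h3 h5
    calc ‖(fderiv ℝ σ z (σ z (EuclideanSpace.single i (1:ℝ)))) (EuclideanSpace.single j (1:ℝ))‖
        ≤ ‖fderiv ℝ σ z (σ z (EuclideanSpace.single i (1:ℝ)))‖ := h1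
      _ ≤ ‖fderiv ℝ σ z‖ * ‖σ z (EuclideanSpace.single i (1:ℝ))‖ := h2
      _ ≤ M * M := mul_le_mul h4 h9 h6 hM0.le
      _ = M^2 := by ring
      _ ≤ MD := hMD1
  have hDlip : ∀ (i j : Fin m) (z w : Vec d),
      ‖Dvf d m σ i j z - Dvf d m σ i j w‖ ≤ MD * ‖z - w‖ := by
    intro i j z w
    rw [Dvf_eq σ hdσ, Dvf_eq σ hdσ]
    set ei := EuclideanSpace.single i (1:ℝ)
    set ej := EuclideanSpace.single j (1:ℝ)
    have key : fderiv ℝ σ z (σ z ei) ej - fderiv ℝ σ w (σ w ei) ej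
        = ((fderiv ℝ σ z - fderiv ℝ σ w) (σ z ei)) ej + (fderiv ℝ σ w ((σ z - σ w) ei)) ej := by
      simp only [ContinuousLinearMap.sub_apply, map_sub]
      abel
    rw [key]
    have hej : ‖ej‖ = 1 := by rw [EuclideanSpace.norm_single, norm_one]
    have hei : ‖ei‖ = 1 := by rw [EuclideanSpace.norm_single, norm_one]
    have b1 : ‖((fderiv ℝ σ z - fderiv ℝ σ w) (σ z ei)) ej‖ ≤ (M * ‖z - w‖) * M := by
      have h1 := ((fderiv ℝ σ z - fderiv ℝ σ w) (σ z ei)).le_opNorm ej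
      rw [hej, mul_one] at h1
      have h2 := (fderiv ℝ σ z - fderiv ℝ σ w).le_opNorm (σ z ei)
      have h3 := (σ z).le_opNorm ei
      rw [hei, mul_one] at h3
      have h4 := hMlip z w
      have h5 := hMσ z
      have h6 : (0:ℝ) ≤ ‖z - w‖ := norm_nonneg _
      have h9 : ‖σ z ei‖ ≤ M := le_trans h3 h5
      calc ‖((fderiv ℝ σ z - fderiv ℝ σ w) (σ z ei)) ej‖
          ≤ ‖(fderiv ℝ σ z - fderiv ℝ σ w) (σ z ei)‖ := h1
        _ ≤ ‖fderiv ℝ σ z - fderiv ℝ σ w‖ * ‖σ z ei‖ := h2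
        _ ≤ (M * ‖z - w‖) * M := mul_le_mul h4 h9 (norm_nonneg _) (mul_nonneg hM0.le h6)
    have b2 : ‖(fderiv ℝ σ w ((σ z - σ w) ei)) ej‖ ≤ M * (M * ‖z - w‖) := by
      have h1 := (fderiv ℝ σ w ((σ z - σ w) ei)).le_opNorm ej
      rw [hej, mul_one] at h1
      have h2 := (fderiv ℝ σ w).le_opNorm ((σ z - σ w) ei)
      have h3 := (σ z - σ w).le_opNorm ei
      rw [hei, mul_one] at h3
      have h4 := hσlip z w
      have h5 := hMf w
      have h6 : (0:ℝ) ≤ ‖z - w‖ := norm_nonneg _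
      have h9 : ‖(σ z - σ w) ei‖ ≤ M * ‖z - w‖ := le_trans h3 h4
      calc ‖(fderiv ℝ σ w ((σ z - σ w) ei)) ej‖
          ≤ ‖fderiv ℝ σ w ((σ z - σ w) ei)‖ := h1
        _ ≤ ‖fderiv ℝ σ w‖ * ‖(σ z - σ w) ei‖ := h2
        _ ≤ M * (M * ‖z - w‖) := mul_le_mul h5 h9 (norm_nonneg _) hM0.le
    calc ‖((fderiv ℝ σ z - fderiv ℝ σ w) (σ z ei)) ej + (fderiv ℝ σ w ((σ z - σ w) ei)) ej‖
        ≤ ‖((fderiv ℝ σ z - fderiv ℝ σ w) (σ z ei)) ej‖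
          + ‖(fderiv ℝ σ w ((σ z - σ w) ei)) ej‖ := norm_add_le _ _
      _ ≤ (M * ‖z - w‖) * M + M * (M * ‖z - w‖) := add_le_add b1 b2
      _ = MD * ‖z - w‖ := by rw [hMDdef]; ring
  -- exponents
  have hκ0 : (0:ℝ) < κ := lt_trans (by norm_num) hκ
  have hγ0 : (0:ℝ) < γ := lt_trans hκ0 hκγ
  have hκ1 : κ < 1 := lt_of_lt_of_le hκγ hγ
  set θ : ℝ := (1 + 3*κ)/2 with hθdef
  have hθ1 : 1 < θ := by rw [hθdef]; linarith
  have hθ3κ : θ < 3*κ := by rw [hθdef]; linarith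
  have h2κθ : 2*κ ≤ θ := by rw [hθdef]; linarith
  have hγθ : γ ≤ θ := le_of_lt (lt_of_le_of_lt hγ hθ1)
  set ε : ℝ := min γ (3*γ - θ) with hεdef
  have hε0 : 0 < ε := lt_min hγ0 (by linarith)
  have hεγ : ε ≤ γ := min_le_left _ _
  have hε3 : ε ≤ 3*γ - θ := min_le_right _ _
  set r' : ℕ := ⌈1/ε⌉₊ with hr'def
  have hr' : 1 ≤ (r' : ℝ) * ε := by
    have h1 : (1/ε : ℝ) ≤ r' := Nat.le_ceil _
    calc (1:ℝ) = (1/ε)*ε := by field_simp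
      _ ≤ r' * ε := mul_le_mul_of_nonneg_right h1 hε0.le
  set aa : ℝ := 1 - (2:ℝ)^(1-θ) with haadef
  have h2θlt : (2:ℝ)^(1-θ) < 1 :=
    Real.rpow_lt_one_of_one_lt_of_neg (by norm_num) (by linarith)
  have h2θpos : (0:ℝ) < (2:ℝ)^(1-θ) := Real.rpow_pos_of_pos (by norm_num) _
  have haa0 : 0 < aa := by rw [haadef]; linarith
  have haa1 : aa < 1 := by rw [haadef]; linarith
  -- positive powers of T
  have hTγ : (0:ℝ) < T^γ := Real.rpow_pos_of_pos hT _
  have hTθγ : (0:ℝ) < T^(θ-γ) := Real.rpow_pos_of_pos hT _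
  have hTγκ : (0:ℝ) < T^(γ-κ) := Real.rpow_pos_of_pos hT _
  have hTθκ : (0:ℝ) < T^(θ-κ) := Real.rpow_pos_of_pos hT _
  have hT2γκ : (0:ℝ) < T^(2*γ-2*κ) := Real.rpow_pos_of_pos hT _
  have hTθ2κ : (0:ℝ) < T^(θ-2*κ) := Real.rpow_pos_of_pos hT _
  -- constants
  have hm2 : (0:ℝ) ≤ (m:ℝ)^2 := by positivity
  set cA : ℝ := M + (m:ℝ)^2 * MD * T^γ with hcAdef
  have hcA0 : 0 < cA := by
    rw [hcAdef]
    have h1 : (0:ℝ) ≤ (m:ℝ)^2 * MD * T^γ := mul_nonneg (mul_nonneg hm2 hMD0.le) hTγ.le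
    linarith only [h1, hM0]
  set cW : ℝ := cA + T^(θ-γ) with hcWdef
  have hcW0 : 0 < cW := by rw [hcWdef]; linarith only [hcA0, hTθγ]
  set cE : ℝ := M*cW^2 + (m:ℝ)^2*M*MD + M + (m:ℝ)^2*MD*cW with hcEdef
  have hcE0 : 0 < cE := by
    rw [hcEdef]
    have h1 : (0:ℝ) ≤ M*cW^2 := mul_nonneg hM0.le (sq_nonneg _)
    have h2 : (0:ℝ) ≤ (m:ℝ)^2*M*MD := mul_nonneg (mul_nonneg hm2 hM0.le) hMD0.le
    have h3 : (0:ℝ) ≤ (m:ℝ)^2*MD*cW := mul_nonneg (mul_nonneg hm2 hMD0.le) hcW0.le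
    linarith only [h1, h2, h3, hM0]
  set cH : ℝ := max 1 (cE/aa) with hcHdef
  have hcH1 : (1:ℝ) ≤ cH := le_max_left _ _
  have hcH0 : (0:ℝ) < cH := lt_of_lt_of_le one_pos hcH1
  have hcHr : (1:ℝ) ≤ cH^r' := one_le_pow₀ hcH1
  set cB1 : ℝ := M*T^(γ-κ) + (m:ℝ)^2*MD*(T^γ*T^(γ-κ)) + T^(θ-κ) with hcB1def
  have hcB10 : 0 < cB1 := by
    rw [hcB1def]
    have h1 : (0:ℝ) ≤ (m:ℝ)^2*MD*(T^γ*T^(γ-κ)) :=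
      mul_nonneg (mul_nonneg hm2 hMD0.le) (mul_nonneg hTγ.le hTγκ.le)
    have h2 : (0:ℝ) < M*T^(γ-κ) := mul_pos hM0 hTγκ
    linarith only [h1, h2, hTθκ]
  set cB2 : ℝ := (m:ℝ)^2*MD*T^(2*γ-2*κ) + T^(θ-2*κ) with hcB2def
  have hcB20 : 0 < cB2 := by
    rw [hcB2def]
    have h1 : (0:ℝ) ≤ (m:ℝ)^2*MD*T^(2*γ-2*κ) := mul_nonneg (mul_nonneg hm2 hMD0.le) hT2γκ.le
    linarith only [h1, hTθ2κ]
  set cS : ℝ := cB1*(2+T*cH^r') with hcSdef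
  have hcS0 : 0 < cS := by
    rw [hcSdef]
    have h1 : (0:ℝ) < 2+T*cH^r' := by
      have h2 : (0:ℝ) < T*cH^r' := mul_pos hT (lt_of_lt_of_le one_pos hcHr)
      linarith only [h2]
    exact mul_pos hcB10 h1
  set cB1' : ℝ := cS*(1/T + cH^r') with hcB1'def
  have hcB1'0 : 0 < cB1' := by
    rw [hcB1'def]
    have h1 : (0:ℝ) < 1/T := by positivity
    exact mul_pos hcS0 (by linarith only [h1, lt_of_lt_of_le one_pos hcHr])
  set cS2 : ℝ := cS + M*T^γ with hcS2def
  have hcS20 : 0 < cS2 := by rw [hcS2def]; linarith only [hcS0, mul_pos hM0 hTγ]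
  set cB2' : ℝ := 2*cS2*(1/T^2 + cH^(2*r')) with hcB2'def
  have hcB2'0 : 0 < cB2' := by
    rw [hcB2'def]
    have h1 : (0:ℝ) < 1/T^2 := by positivity
    have h2 : (0:ℝ) < cH^(2*r') := pow_pos hcH0 _
    exact mul_pos (mul_pos two_pos hcS20) (by linarith only [h1, h2])
  set CC : ℝ := cB1 + cB2 + cB1' + cB2' with hCCdef
  have hCC0 : 0 < CC := by rw [hCCdef]; linarith only [hcB10, hcB20, hcB1'0, hcB2'0]
  set NN : ℕ := 6*r'+1 with hNNdef
  refine ⟨NN+1, fun i j => CC * (NN.choose i : ℝ) * (NN.choose j : ℝ), ?_, ?_⟩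
  · intro i j
    exact mul_nonneg (mul_nonneg hCC0.le (Nat.cast_nonneg _)) (Nat.cast_nonneg _)
  intro x X2 a yy hRP hsol
  obtain ⟨hxfin, hX2cont, hX2fin, chen⟩ := hRP
  obtain ⟨hycont, hy0, C, hDavie⟩ := hsol
  set C' : ℝ := max C 0 with hC'def
  have hC'0 : (0:ℝ) ≤ C' := le_max_right _ _
  set K : ℝ := holderInftyNorm γ 0 T x with hKdef
  set X : ℝ := (holder2ENorm (2 * γ) 0 T X2).toReal with hXdef
  obtain ⟨hKxK, hK0⟩ := holderInfty_facts hγ0 hT hxfin.ne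
  have hX0 : (0:ℝ) ≤ X := ENNReal.toReal_nonneg
  set G : ℝ := 1 + K + X with hGdef
  have hG1 : (1:ℝ) ≤ G := by rw [hGdef]; linarith only [hK0, hX0]
  have hG0 : (0:ℝ) < G := lt_of_lt_of_le one_pos hG1
  have hKG : K ≤ G := by rw [hGdef]; linarith only [hX0]
  have hXG : X ≤ G := by rw [hGdef]; linarith only [hK0]
  -- pointwise bounds on the rough path
  have hxb : ∀ u v : ℝ, 0 ≤ u → u < v → v ≤ T → ‖x v - x u‖ ≤ G * (v-u)^γ := by
    intro u v hu huv hv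
    have h1 := holder_le_of_fin hxfin.ne hu huv hv
    have h2 : (0:ℝ) ≤ (v-u)^γ := Real.rpow_nonneg (by linarith) _
    have h3 : (holderENorm γ 0 T x).toReal ≤ G := le_trans hKxK hKG
    exact h1.trans (mul_le_mul_of_nonneg_right h3 h2)
  have hX2b : ∀ u v : ℝ, 0 ≤ u → u < v → v ≤ T → ∀ i j : Fin m,
      |X2 u v (i,j)| ≤ G * (v-u)^(2*γ) := by
    intro u v hu huv hv i j
    have h1 := (abs_coord_le (X2 u v) (i,j)).trans (holder2_le_of_fin hX2fin.ne hu huv hv)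
    have h2 : (0:ℝ) ≤ (v-u)^(2*γ) := Real.rpow_nonneg (by linarith) _
    exact h1.trans (mul_le_mul_of_nonneg_right hXG h2)
  -- the remainder
  set R : ℝ → ℝ → Vec d := fun u v => yy v - yy u - σ (yy u) (x v - x u)
    - ∑ i : Fin m, ∑ j : Fin m, X2 u v (i, j) • Dvf d m σ i j (yy u) with hRdef
  have hRb : ∀ u v, 0 ≤ u → u ≤ v → v ≤ T → ‖R u v‖ ≤ C' * (v-u)^(3*κ) := by
    intro u v hu huv hv
    have h1 := hDavie u v hu huv hv
    have h2 : (0:ℝ) ≤ (v-u)^(3*κ) := Real.rpow_nonneg (by linarith) _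
    have h3 : C ≤ C' := le_max_left _ _
    have h4 : ‖R u v‖ ≤ C * (v-u)^(3*κ) := h1
    exact h4.trans (mul_le_mul_of_nonneg_right h3 h2)
  have hsumb : ∀ u v, 0 ≤ u → u < v → v ≤ T → ∀ z : Vec d,
      ‖∑ i : Fin m, ∑ j : Fin m, X2 u v (i, j) • Dvf d m σ i j z‖
        ≤ (m:ℝ)^2 * (G*(v-u)^(2*γ)) * MD := by
    intro u v hu huv hv z
    exact sum_smul_bound (X2 u v) (fun i j => Dvf d m σ i j z) MD (G*(v-u)^(2*γ))
      (fun i j => hDb i j z) (fun i j => hX2b u v hu huv hv i j)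
      (mul_nonneg hG0.le (Real.rpow_nonneg (by linarith) _))
  have opb : ∀ (z : Vec d) (w : Vec m) (b : ℝ), ‖w‖ ≤ b → ‖σ z w‖ ≤ M * b := by
    intro z w b hw
    calc ‖σ z w‖ ≤ ‖σ z‖ * ‖w‖ := ContinuousLinearMap.le_opNorm _ _
      _ ≤ M * b := mul_le_mul (hMσ z) hw (norm_nonneg _) hM0.le
  -- the scale H₀
  set v0 : ℝ := min 1 (aa/cE) / G^2 with hv0def
  have hminpos : 0 < min 1 (aa/cE) := lt_min one_pos (div_pos haa0 hcE0)
  have hv0pos : 0 < v0 := by rw [hv0def]; positivity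
  have hv0le1 : v0 ≤ 1 := by
    rw [hv0def, div_le_one (by positivity)]
    calc min 1 (aa/cE) ≤ 1 := min_le_left _ _
      _ ≤ G^2 := one_le_pow₀ hG1
  set H₀ : ℝ := min T (v0 ^ r') with hH₀def
  have hH₀pos : 0 < H₀ := lt_min hT (pow_pos hv0pos r')
  have hH₀T : H₀ ≤ T := min_le_left _ _
  have hH₀1 : H₀ ≤ 1 := (min_le_right _ _).trans (pow_le_one₀ hv0pos.le hv0le1)
  have hH₀ε : cE * G^2 * H₀^ε ≤ aa := by
    have h1 : H₀^ε ≤ (v0 ^ r')^ε :=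
      Real.rpow_le_rpow hH₀pos.le (min_le_right _ _) hε0.le
    have h2 : ((v0 ^ r' : ℝ))^ε = v0 ^ ((r':ℝ)*ε) := by
      rw [← Real.rpow_natCast v0 r', ← Real.rpow_mul hv0pos.le]
    have h3 : v0 ^ ((r':ℝ)*ε) ≤ v0 ^ (1:ℝ) :=
      Real.rpow_le_rpow_of_exponent_ge hv0pos hv0le1 hr'
    rw [Real.rpow_one] at h3
    have h4 : G^2 * v0 = min 1 (aa/cE) := by
      rw [hv0def]; field_simp
    have h5 : H₀^ε ≤ v0 := by rw [h2] at h1; linarith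
    have h6 : (0:ℝ) ≤ H₀^ε := Real.rpow_nonneg hH₀pos.le _
    calc cE * G^2 * H₀^ε ≤ cE * G^2 * v0 :=
          mul_le_mul_of_nonneg_left h5 (mul_nonneg hcE0.le (pow_nonneg hG0.le 2))
      _ = cE * (G^2 * v0) := by ring
      _ = cE * min 1 (aa/cE) := by rw [h4]
      _ ≤ cE * (aa/cE) := mul_le_mul_of_nonneg_left (min_le_right _ _) hcE0.le
      _ = aa := by field_simp
  -- the halving step
  have step : ∀ h' : ℝ, 0 < h' → h' ≤ H₀ →
      (∀ u v : ℝ, 0 ≤ u → u < v → v ≤ T → v - u ≤ h'/2 → ‖R u v‖ ≤ G * (v-u)^θ) →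
      ∀ u v : ℝ, 0 ≤ u → u < v → v ≤ T → v - u ≤ h' → ‖R u v‖ ≤ G * (v-u)^θ := by
    intro h' hh'0 hh'H IH s t hs hst htT hlen
    set u : ℝ := (s+t)/2 with hudef
    have hsu : s < u := by rw [hudef]; linarith only [hst]
    have hut : u < t := by rw [hudef]; linarith only [hst]
    have hu0 : 0 ≤ u := by linarith only [hs, hsu]
    have huT : u ≤ T := by linarith only [htT, hut]
    set h2v : ℝ := (t-s)/2 with hh2def
    have hus : u - s = h2v := by rw [hudef, hh2def]; ring
    have hutv : t - u = h2v := by rw [hudef, hh2def]; ring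
    have hh2pos : 0 < h2v := by rw [hh2def]; linarith only [hst]
    have hh2le : h2v ≤ h'/2 := by rw [hh2def]; linarith only [hlen]
    have hh2H : h2v ≤ H₀ := by linarith only [hh2le, hh'H, hH₀pos]
    have hh21 : h2v ≤ 1 := le_trans hh2H hH₀1
    have hγnn : (0:ℝ) ≤ h2v^γ := Real.rpow_nonneg hh2pos.le _
    have h2γnn : (0:ℝ) ≤ h2v^(2*γ) := Real.rpow_nonneg hh2pos.le _
    have hθnn : (0:ℝ) ≤ h2v^θ := Real.rpow_nonneg hh2pos.le _
    have hRsu : ‖R s u‖ ≤ G * h2v^θ := by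
      have h1 := IH s u hs hsu huT (by rw [hus]; exact hh2le)
      rwa [hus] at h1
    have hRut : ‖R u t‖ ≤ G * h2v^θ := by
      have h1 := IH u t hu0 hut htT (by rw [hutv]; exact hh2le)
      rwa [hutv] at h1
    have hxsu : ‖x u - x s‖ ≤ G * h2v^γ := by
      have h1 := hxb s u hs hsu huT; rwa [hus] at h1
    have hxut : ‖x t - x u‖ ≤ G * h2v^γ := by
      have h1 := hxb u t hu0 hut htT; rwa [hutv] at h1
    have hsum_su : ‖∑ i : Fin m, ∑ j : Fin m, X2 s u (i, j) • Dvf d m σ i j (yy s)‖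
        ≤ (m:ℝ)^2 * (G*h2v^(2*γ)) * MD := by
      have h1 := hsumb s u hs hsu huT (yy s); rwa [hus] at h1
    have hyinc : yy u - yy s = σ (yy s) (x u - x s)
        + (∑ i : Fin m, ∑ j : Fin m, X2 s u (i, j) • Dvf d m σ i j (yy s)) + R s u := by
      simp only [hRdef]; abel
    have hWid : yy u - yy s - σ (yy s) (x u - x s)
        = (∑ i : Fin m, ∑ j : Fin m, X2 s u (i, j) • Dvf d m σ i j (yy s)) + R s u := by
      rw [hyinc]; abel
    -- small rpow facts
    have e1 : h2v^(2*γ) ≤ T^γ * h2v^γ := by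
      have q1 : h2v^(2*γ) = h2v^γ * h2v^γ := by
        rw [show (2:ℝ)*γ = γ + γ by ring, Real.rpow_add hh2pos]
      have q2 : h2v^γ ≤ T^γ := Real.rpow_le_rpow hh2pos.le (by linarith only [hh2H, hH₀T]) hγ0.le
      rw [q1]
      exact mul_le_mul_of_nonneg_right q2 hγnn
    have e2 : h2v^θ ≤ T^(θ-γ) * h2v^γ := by
      have q1 : h2v^θ = h2v^(θ-γ) * h2v^γ := by
        rw [← Real.rpow_add hh2pos]; ring_nf
      have q2 : h2v^(θ-γ) ≤ T^(θ-γ) :=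
        Real.rpow_le_rpow hh2pos.le (by linarith only [hh2H, hH₀T]) (by linarith only [hγθ])
      rw [q1]
      exact mul_le_mul_of_nonneg_right q2 hγnn
    have hδy : ‖yy u - yy s‖ ≤ cW * G * h2v^γ := by
      rw [hyinc]
      have b1 : ‖σ (yy s) (x u - x s)‖ ≤ M * (G * h2v^γ) := opb _ _ _ hxsu
      calc ‖σ (yy s) (x u - x s)
            + (∑ i : Fin m, ∑ j : Fin m, X2 s u (i, j) • Dvf d m σ i j (yy s)) + R s u‖
          ≤ ‖σ (yy s) (x u - x s)‖
            + ‖∑ i : Fin m, ∑ j : Fin m, X2 s u (i, j) • Dvf d m σ i j (yy s)‖ + ‖R s u‖ :=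
            norm_add₃_le
        _ ≤ M * (G * h2v^γ) + (m:ℝ)^2 * (G*h2v^(2*γ)) * MD + G * h2v^θ :=
            add_le_add (add_le_add b1 hsum_su) hRsu
        _ ≤ M * (G * h2v^γ) + (m:ℝ)^2 * (G*(T^γ * h2v^γ)) * MD + G * (T^(θ-γ) * h2v^γ) := by
            have q1 : (m:ℝ)^2 * (G*h2v^(2*γ)) * MD ≤ (m:ℝ)^2 * (G*(T^γ * h2v^γ)) * MD := by
              have := mul_le_mul_of_nonneg_left e1 hG0.le
              have h2 : (0:ℝ) ≤ (m:ℝ)^2 * MD := mul_nonneg hm2 hMD0.le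
              calc (m:ℝ)^2 * (G*h2v^(2*γ)) * MD = ((m:ℝ)^2*MD) * (G*h2v^(2*γ)) := by ring
                _ ≤ ((m:ℝ)^2*MD) * (G*(T^γ * h2v^γ)) := mul_le_mul_of_nonneg_left this h2
                _ = (m:ℝ)^2 * (G*(T^γ * h2v^γ)) * MD := by ring
            have q2 : G * h2v^θ ≤ G * (T^(θ-γ) * h2v^γ) := mul_le_mul_of_nonneg_left e2 hG0.le
            linarith only [q1, q2]
        _ = cW * G * h2v^γ := by rw [hcWdef, hcAdef]; ring
    have hW : ‖yy u - yy s - σ (yy s) (x u - x s)‖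
        ≤ (m:ℝ)^2 * (G*h2v^(2*γ)) * MD + G * h2v^θ := by
      rw [hWid]
      exact (norm_add_le _ _).trans (add_le_add hsum_su hRsu)
    -- the error term and Chen algebra
    set Err : Vec d := (σ (yy u) - σ (yy s) - fderiv ℝ σ (yy s) (yy u - yy s)) (x t - x u)
      + (fderiv ℝ σ (yy s) (yy u - yy s - σ (yy s) (x u - x s))) (x t - x u)
      + ∑ i : Fin m, ∑ j : Fin m, X2 u t (i, j) • (Dvf d m σ i j (yy u) - Dvf d m σ i j (yy s))
      with hErrdef
    have hchen : (∑ i : Fin m, ∑ j : Fin m, X2 s t (i, j) • Dvf d m σ i j (yy s))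
        = (∑ i : Fin m, ∑ j : Fin m, X2 s u (i, j) • Dvf d m σ i j (yy s))
        + (∑ i : Fin m, ∑ j : Fin m, X2 u t (i, j) • Dvf d m σ i j (yy s))
        + (∑ i : Fin m, ∑ j : Fin m,
            ((x u i - x s i) * (x t j - x u j)) • Dvf d m σ i j (yy s)) := by
      have hterm : ∀ i j : Fin m, X2 s t (i,j) • Dvf d m σ i j (yy s)
          = X2 s u (i,j) • Dvf d m σ i j (yy s) + X2 u t (i,j) • Dvf d m σ i j (yy s)
            + ((x u i - x s i) * (x t j - x u j)) • Dvf d m σ i j (yy s) := by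
        intro i j
        rw [← add_smul, ← add_smul]
        congr 1
        have hch := chen s u t hs hsu.le hut.le htT i j
        linarith only [hch]
      simp only [hterm, Finset.sum_add_distrib]
    have hbilin : (∑ i : Fin m, ∑ j : Fin m,
          ((x u i - x s i) * (x t j - x u j)) • Dvf d m σ i j (yy s))
        = (fderiv ℝ σ (yy s) (σ (yy s) (x u - x s))) (x t - x u) := by
      have h1 : (fderiv ℝ σ (yy s) (σ (yy s) (x u - x s))) (x t - x u)
          = ∑ i : Fin m, ∑ j : Fin m, ((x u - x s) i * (x t - x u) j) •
              (fderiv ℝ σ (yy s) (σ (yy s) (EuclideanSpace.single i (1:ℝ))))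
                (EuclideanSpace.single j (1:ℝ)) := by
        rw [clm_apply_decomp (σ (yy s)) (x u - x s), map_sum, ContinuousLinearMap.sum_apply]
        refine Finset.sum_congr rfl fun i _ => ?_
        rw [map_smul, ContinuousLinearMap.smul_apply,
          clm_apply_decomp (fderiv ℝ σ (yy s) (σ (yy s) (EuclideanSpace.single i (1:ℝ))))
            (x t - x u), Finset.smul_sum]
        refine Finset.sum_congr rfl fun j _ => ?_
        rw [smul_smul]
      rw [h1]
      refine Finset.sum_congr rfl fun i _ => Finset.sum_congr rfl fun j _ => ?_
      rw [Dvf_eq σ hdσ]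
      congr 1
    have hsplit : σ (yy s) (x t - x s) = σ (yy s) (x u - x s) + σ (yy s) (x t - x u) := by
      rw [← map_add]; congr 1; abel
    have hfd : fderiv ℝ σ (yy s) (yy u - yy s - σ (yy s) (x u - x s))
        = fderiv ℝ σ (yy s) (yy u - yy s) - fderiv ℝ σ (yy s) (σ (yy s) (x u - x s)) :=
      map_sub _ _ _
    have hDsum : (∑ i : Fin m, ∑ j : Fin m,
          X2 u t (i, j) • (Dvf d m σ i j (yy u) - Dvf d m σ i j (yy s)))
        = (∑ i : Fin m, ∑ j : Fin m, X2 u t (i, j) • Dvf d m σ i j (yy u))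
          - (∑ i : Fin m, ∑ j : Fin m, X2 u t (i, j) • Dvf d m σ i j (yy s)) := by
      rw [← Finset.sum_sub_distrib]
      refine Finset.sum_congr rfl fun i _ => ?_
      rw [← Finset.sum_sub_distrib]
      exact Finset.sum_congr rfl fun j _ => smul_sub _ _ _
    have hEid : R s t = R s u + R u t + Err := by
      rw [hErrdef]
      simp only [hRdef]
      rw [hchen, hbilin, hsplit, hfd, hDsum]
      simp only [ContinuousLinearMap.sub_apply]
      abel
    -- bounds on the error
    have hbT1 : ‖(σ (yy u) - σ (yy s) - fderiv ℝ σ (yy s) (yy u - yy s)) (x t - x u)‖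
        ≤ (M * ‖yy u - yy s‖^2) * ‖x t - x u‖ := by
      have h1 := (σ (yy u) - σ (yy s) - fderiv ℝ σ (yy s) (yy u - yy s)).le_opNorm (x t - x u)
      have h2 := hMtay (yy s) (yy u)
      exact h1.trans (mul_le_mul_of_nonneg_right h2 (norm_nonneg _))
    have hbT2 : ‖(fderiv ℝ σ (yy s) (yy u - yy s - σ (yy s) (x u - x s))) (x t - x u)‖
        ≤ (M * ‖yy u - yy s - σ (yy s) (x u - x s)‖) * ‖x t - x u‖ := by
      have h1 := (fderiv ℝ σ (yy s) (yy u - yy s - σ (yy s) (x u - x s))).le_opNorm (x t - x u)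
      have h2 := (fderiv ℝ σ (yy s)).le_opNorm (yy u - yy s - σ (yy s) (x u - x s))
      have h3 : ‖fderiv ℝ σ (yy s) (yy u - yy s - σ (yy s) (x u - x s))‖
          ≤ M * ‖yy u - yy s - σ (yy s) (x u - x s)‖ :=
        h2.trans (mul_le_mul_of_nonneg_right (hMf _) (norm_nonneg _))
      exact h1.trans (mul_le_mul_of_nonneg_right h3 (norm_nonneg _))
    have hbT3 : ‖∑ i : Fin m, ∑ j : Fin m,
          X2 u t (i, j) • (Dvf d m σ i j (yy u) - Dvf d m σ i j (yy s))‖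
        ≤ (m:ℝ)^2 * (G*h2v^(2*γ)) * (MD * ‖yy u - yy s‖) := by
      have h1 := sum_smul_bound (X2 u t)
        (fun i j => Dvf d m σ i j (yy u) - Dvf d m σ i j (yy s))
        (MD * ‖yy u - yy s‖) (G*(t-u)^(2*γ))
        (fun i j => hDlip i j (yy u) (yy s))
        (fun i j => hX2b u t hu0 hut htT i j)
        (mul_nonneg hG0.le (Real.rpow_nonneg (by linarith only [hut]) _))
      rwa [hutv] at h1
    -- rpow product facts
    have f1 : h2v^γ * h2v^γ * h2v^γ ≤ H₀^ε * h2v^θ := by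
      have q1 : h2v^γ * h2v^γ * h2v^γ = h2v^(3*γ) := by
        rw [show (3:ℝ)*γ = γ + γ + γ by ring, Real.rpow_add hh2pos, Real.rpow_add hh2pos]
      have q2 : h2v^(3*γ) = h2v^(3*γ-θ) * h2v^θ := by
        rw [← Real.rpow_add hh2pos]; ring_nf
      have q3 : h2v^(3*γ-θ) ≤ h2v^ε := Real.rpow_le_rpow_of_exponent_ge hh2pos hh21 hε3
      have q4 : h2v^ε ≤ H₀^ε := Real.rpow_le_rpow hh2pos.le hh2H hε0.le
      rw [q1, q2]
      exact mul_le_mul_of_nonneg_right (q3.trans q4) hθnn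
    have f2 : h2v^(2*γ) * h2v^γ ≤ H₀^ε * h2v^θ := by
      have q1 : h2v^(2*γ) * h2v^γ = h2v^γ * h2v^γ * h2v^γ := by
        rw [show (2:ℝ)*γ = γ + γ by ring, Real.rpow_add hh2pos]
      rw [q1]; exact f1
    have f3 : h2v^θ * h2v^γ ≤ H₀^ε * h2v^θ := by
      have q3 : h2v^γ ≤ h2v^ε := Real.rpow_le_rpow_of_exponent_ge hh2pos hh21 hεγ
      have q4 : h2v^ε ≤ H₀^ε := Real.rpow_le_rpow hh2pos.le hh2H hε0.le
      calc h2v^θ * h2v^γ = h2v^γ * h2v^θ := by ring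
        _ ≤ H₀^ε * h2v^θ := mul_le_mul_of_nonneg_right (q3.trans q4) hθnn
    -- numeric bound on Err
    have hδynn : (0:ℝ) ≤ ‖yy u - yy s‖ := norm_nonneg _
    have hErrb : ‖Err‖ ≤ cE * G^3 * (H₀^ε * h2v^θ) := by
      have hstep1 : ‖Err‖ ≤ (M * ‖yy u - yy s‖^2) * ‖x t - x u‖
          + (M * ‖yy u - yy s - σ (yy s) (x u - x s)‖) * ‖x t - x u‖
          + (m:ℝ)^2 * (G*h2v^(2*γ)) * (MD * ‖yy u - yy s‖) := by
        rw [hErrdef]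
        exact norm_add₃_le.trans (add_le_add (add_le_add hbT1 hbT2) hbT3)
      have hstep2 : ‖Err‖ ≤ (M * (cW * G * h2v^γ)^2) * (G * h2v^γ)
          + (M * ((m:ℝ)^2 * (G*h2v^(2*γ)) * MD + G * h2v^θ)) * (G * h2v^γ)
          + (m:ℝ)^2 * (G*h2v^(2*γ)) * (MD * (cW * G * h2v^γ)) := by
        refine hstep1.trans ?_
        have hbnn : (0:ℝ) ≤ cW * G * h2v^γ := mul_nonneg (mul_nonneg hcW0.le hG0.le) hγnn
        have hWnn : (0:ℝ) ≤ (m:ℝ)^2 * (G*h2v^(2*γ)) * MD + G * h2v^θ := by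
          have := mul_nonneg (mul_nonneg hm2 (mul_nonneg hG0.le h2γnn)) hMD0.le
          have h9 := mul_nonneg hG0.le hθnn
          linarith only [this, h9]
        have s1 : (M * ‖yy u - yy s‖^2) * ‖x t - x u‖
            ≤ (M * (cW * G * h2v^γ)^2) * (G * h2v^γ) := by
          refine mul_le_mul ?_ hxut (norm_nonneg _) ?_
          · exact mul_le_mul_of_nonneg_left (pow_le_pow_left₀ hδynn hδy 2) hM0.le
          · exact mul_nonneg hM0.le (sq_nonneg _)
        have s2 : (M * ‖yy u - yy s - σ (yy s) (x u - x s)‖) * ‖x t - x u‖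
            ≤ (M * ((m:ℝ)^2 * (G*h2v^(2*γ)) * MD + G * h2v^θ)) * (G * h2v^γ) := by
          refine mul_le_mul ?_ hxut (norm_nonneg _) (mul_nonneg hM0.le hWnn)
          exact mul_le_mul_of_nonneg_left hW hM0.le
        have s3 : (m:ℝ)^2 * (G*h2v^(2*γ)) * (MD * ‖yy u - yy s‖)
            ≤ (m:ℝ)^2 * (G*h2v^(2*γ)) * (MD * (cW * G * h2v^γ)) :=
          mul_le_mul_of_nonneg_left (mul_le_mul_of_nonneg_left hδy hMD0.le)
            (mul_nonneg hm2 (mul_nonneg hG0.le h2γnn))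
        exact add_le_add (add_le_add s1 s2) s3
      refine hstep2.trans ?_
      have g23 : G^2 ≤ G^3 := pow_le_pow_right₀ hG1 (by norm_num)
      have r1 : (M * (cW * G * h2v^γ)^2) * (G * h2v^γ)
          = (M * cW^2) * G^3 * (h2v^γ * h2v^γ * h2v^γ) := by ring
      have r2 : (M * ((m:ℝ)^2 * (G*h2v^(2*γ)) * MD + G * h2v^θ)) * (G * h2v^γ)
          = ((m:ℝ)^2*M*MD) * G^2 * (h2v^(2*γ) * h2v^γ) + M * G^2 * (h2v^θ * h2v^γ) := by ring
      have r3 : (m:ℝ)^2 * (G*h2v^(2*γ)) * (MD * (cW * G * h2v^γ))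
          = ((m:ℝ)^2*MD*cW) * G^2 * (h2v^(2*γ) * h2v^γ) := by ring
      rw [r1, r2, r3]
      have q := Real.rpow_nonneg hH₀pos.le ε
      have w1 : (M * cW^2) * G^3 * (h2v^γ * h2v^γ * h2v^γ)
          ≤ (M * cW^2) * G^3 * (H₀^ε * h2v^θ) := by
        refine mul_le_mul_of_nonneg_left f1 ?_
        exact mul_nonneg (mul_nonneg hM0.le (sq_nonneg _)) (by positivity)
      have w2 : ((m:ℝ)^2*M*MD) * G^2 * (h2v^(2*γ) * h2v^γ)
          ≤ ((m:ℝ)^2*M*MD) * G^3 * (H₀^ε * h2v^θ) := by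
        have := mul_le_mul_of_nonneg_left f2
          (mul_nonneg (mul_nonneg (mul_nonneg hm2 hM0.le) hMD0.le) (pow_nonneg hG0.le 2))
        refine le_trans ?_ (mul_le_mul_of_nonneg_right
          (mul_le_mul_of_nonneg_left g23 (mul_nonneg (mul_nonneg hm2 hM0.le) hMD0.le))
          (mul_nonneg q hθnn))
        calc ((m:ℝ)^2*M*MD) * G^2 * (h2v^(2*γ) * h2v^γ)
            = ((m:ℝ)^2*M*MD*G^2) * (h2v^(2*γ) * h2v^γ) := by ring
          _ ≤ ((m:ℝ)^2*M*MD*G^2) * (H₀^ε * h2v^θ) := this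
          _ = ((m:ℝ)^2*M*MD) * G^2 * (H₀^ε * h2v^θ) := by ring
      have w3 : M * G^2 * (h2v^θ * h2v^γ) ≤ M * G^3 * (H₀^ε * h2v^θ) := by
        have h1 := mul_le_mul_of_nonneg_left f3 (mul_nonneg hM0.le (pow_nonneg hG0.le 2))
        refine le_trans ?_ (mul_le_mul_of_nonneg_right
          (mul_le_mul_of_nonneg_left g23 hM0.le) (mul_nonneg q hθnn))
        calc M * G^2 * (h2v^θ * h2v^γ) = (M*G^2) * (h2v^θ * h2v^γ) := by ring
          _ ≤ (M*G^2) * (H₀^ε * h2v^θ) := h1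
          _ = M * G^2 * (H₀^ε * h2v^θ) := by ring
      have w4 : ((m:ℝ)^2*MD*cW) * G^2 * (h2v^(2*γ) * h2v^γ)
          ≤ ((m:ℝ)^2*MD*cW) * G^3 * (H₀^ε * h2v^θ) := by
        have h1 := mul_le_mul_of_nonneg_left f2
          (mul_nonneg (mul_nonneg (mul_nonneg hm2 hMD0.le) hcW0.le) (pow_nonneg hG0.le 2))
        refine le_trans ?_ (mul_le_mul_of_nonneg_right
          (mul_le_mul_of_nonneg_left g23 (mul_nonneg (mul_nonneg hm2 hMD0.le) hcW0.le))
          (mul_nonneg q hθnn))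
        calc ((m:ℝ)^2*MD*cW) * G^2 * (h2v^(2*γ) * h2v^γ)
            = ((m:ℝ)^2*MD*cW*G^2) * (h2v^(2*γ) * h2v^γ) := by ring
          _ ≤ ((m:ℝ)^2*MD*cW*G^2) * (H₀^ε * h2v^θ) := h1
          _ = ((m:ℝ)^2*MD*cW) * G^2 * (H₀^ε * h2v^θ) := by ring
      have final : (M * cW^2) * G^3 * (H₀^ε * h2v^θ) + (((m:ℝ)^2*M*MD) * G^3 * (H₀^ε * h2v^θ)
          + M * G^3 * (H₀^ε * h2v^θ)) + ((m:ℝ)^2*MD*cW) * G^3 * (H₀^ε * h2v^θ)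
          = cE * G^3 * (H₀^ε * h2v^θ) := by rw [hcEdef]; ring
      linarith only [w1, w2, w3, w4, final]
    have hErrb2 : ‖Err‖ ≤ aa * (G * (t-s)^θ) := by
      have h1 : cE * G^3 * (H₀^ε * h2v^θ) = (cE * G^2 * H₀^ε) * (G * h2v^θ) := by ring
      have h2 : (cE * G^2 * H₀^ε) * (G * h2v^θ) ≤ aa * (G * h2v^θ) :=
        mul_le_mul_of_nonneg_right hH₀ε (mul_nonneg hG0.le hθnn)
      have h3 : h2v^θ ≤ (t-s)^θ :=
        Real.rpow_le_rpow hh2pos.le (by rw [hh2def]; linarith only [hst]) (by linarith only [hθ1])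
      have h4 : aa * (G * h2v^θ) ≤ aa * (G * (t-s)^θ) :=
        mul_le_mul_of_nonneg_left (mul_le_mul_of_nonneg_left h3 hG0.le) haa0.le
      calc ‖Err‖ ≤ cE * G^3 * (H₀^ε * h2v^θ) := hErrb
        _ = (cE * G^2 * H₀^ε) * (G * h2v^θ) := h1
        _ ≤ aa * (G * h2v^θ) := h2
        _ ≤ aa * (G * (t-s)^θ) := h4
    -- conclusion of the step
    have hq1 : h2v^θ = (t-s)^θ / (2:ℝ)^θ := by
      rw [hh2def, Real.div_rpow (by linarith only [hst]) (by norm_num)]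
    have h2θ0 : (0:ℝ) < (2:ℝ)^θ := Real.rpow_pos_of_pos (by norm_num) _
    have hq2 : (2:ℝ)^((1:ℝ)-θ) = 2/(2:ℝ)^θ := by
      rw [Real.rpow_sub (by norm_num), Real.rpow_one]
    calc ‖R s t‖ = ‖R s u + R u t + Err‖ := by rw [hEid]
      _ ≤ ‖R s u‖ + ‖R u t‖ + ‖Err‖ := norm_add₃_le
      _ ≤ G * h2v^θ + G * h2v^θ + aa * (G * (t-s)^θ) :=
          add_le_add (add_le_add hRsu hRut) hErrb2
      _ = ((2:ℝ)/(2:ℝ)^θ + aa) * (G * (t-s)^θ) := by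
          rw [hq1]; field_simp; ring
      _ = ((2:ℝ)^((1:ℝ)-θ) + aa) * (G * (t-s)^θ) := by rw [hq2]
      _ = 1 * (G * (t-s)^θ) := by rw [haadef]; ring
      _ = G * (t-s)^θ := one_mul _
  -- base scale from the Davie remainder bound
  have hbase : ∃ k : ℕ, C' * (H₀/2^k) ^ (3*κ-θ) ≤ G := by
    have h1 : Filter.Tendsto (fun k : ℕ => H₀/2^k) Filter.atTop (nhds 0) := by
      have h2 := tendsto_pow_atTop_nhds_zero_of_lt_one
        (r := (1:ℝ)/2) (by norm_num) (by norm_num)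
      have h3 := h2.const_mul H₀
      rw [mul_zero] at h3
      refine h3.congr fun k => ?_
      rw [one_div, inv_pow, ← div_eq_mul_inv]
    have h4 : ContinuousAt (fun uu : ℝ => uu ^ (3*κ-θ)) 0 :=
      Real.continuousAt_rpow_const 0 _ (Or.inr (by linarith only [hθ3κ]))
    have h5 := (h4.tendsto.comp h1)
    rw [Real.zero_rpow (by linarith only [hθ3κ] : 3*κ-θ ≠ 0)] at h5
    have h6 := h5.const_mul C'
    rw [mul_zero] at h6
    have h7 : ∀ᶠ k in Filter.atTop, C' * (H₀/2^k)^(3*κ-θ) < G :=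
      h6.eventually_lt_const hG0
    obtain ⟨k, hk⟩ := h7.exists
    exact ⟨k, hk.le⟩
  obtain ⟨k, hk⟩ := hbase
  have Qind : ∀ j : ℕ, j ≤ k → ∀ u v : ℝ, 0 ≤ u → u < v → v ≤ T →
      v - u ≤ H₀ * 2^j / 2^k → ‖R u v‖ ≤ G * (v-u)^θ := by
    intro j
    induction j with
    | zero =>
      intro _ u v hu huv hv hlen
      rw [pow_zero, mul_one] at hlen
      have h1 := hRb u v hu huv.le hv
      have h2 : (v-u)^(3*κ) = (v-u)^(3*κ-θ) * (v-u)^θ := by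
        rw [← Real.rpow_add (by linarith only [huv])]; ring_nf
      have h3 : (v-u)^(3*κ-θ) ≤ (H₀/2^k)^(3*κ-θ) :=
        Real.rpow_le_rpow (by linarith only [huv]) hlen (by linarith only [hθ3κ])
      have h4 : (0:ℝ) ≤ (v-u)^θ := Real.rpow_nonneg (by linarith only [huv]) _
      calc ‖R u v‖ ≤ C' * (v-u)^(3*κ) := h1
        _ = C' * (v-u)^(3*κ-θ) * (v-u)^θ := by rw [h2]; ring
        _ ≤ C' * (H₀/2^k)^(3*κ-θ) * (v-u)^θ :=
            mul_le_mul_of_nonneg_right (mul_le_mul_of_nonneg_left h3 hC'0) h4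
        _ ≤ G * (v-u)^θ := mul_le_mul_of_nonneg_right hk h4
    | succ j ih =>
      intro hjk u v hu huv hv hlen
      have hj : j ≤ k := Nat.le_of_succ_le hjk
      have h2k : (0:ℝ) < (2:ℝ)^k := by positivity
      have hh'0 : (0:ℝ) < H₀ * 2^(j+1) / 2^k :=
        div_pos (mul_pos hH₀pos (by positivity)) h2k
      have hh'H : H₀ * 2^(j+1) / 2^k ≤ H₀ := by
        rw [div_le_iff₀ h2k]
        have h5 : (2:ℝ)^(j+1) ≤ 2^k := pow_le_pow_right₀ (by norm_num) hjk
        exact mul_le_mul_of_nonneg_left h5 hH₀pos.le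
      refine step _ hh'0 hh'H ?_ u v hu huv hv hlen
      intro u' v' hu' huv' hv' hlen'
      refine ih hj u' v' hu' huv' hv' ?_
      have h6 : H₀ * 2^(j+1) / 2^k / 2 = H₀ * 2^j / 2^k := by
        field_simp
        ring
      linarith only [hlen', h6]
  have RP : ∀ u v : ℝ, 0 ≤ u → u < v → v ≤ T → v - u ≤ H₀ → ‖R u v‖ ≤ G * (v-u)^θ := by
    intro u v hu huv hv hlen
    refine Qind k le_rfl u v hu huv hv ?_
    have h2k : (0:ℝ) < (2:ℝ)^k := by positivity
    have h1 : H₀ * 2^k / 2^k = H₀ := by field_simp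
    linarith only [hlen, h1]
  -- fine-scale bounds
  have fine1 : ∀ u v : ℝ, 0 ≤ u → u < v → v ≤ T → v - u ≤ H₀ →
      ‖yy v - yy u‖ ≤ cB1 * G * (v-u)^κ := by
    intro u v hu huv hv hlen
    have hvu0 : (0:ℝ) < v - u := by linarith only [huv]
    have hvuT : v - u ≤ T := by linarith only [hlen, hH₀T]
    have hκnn : (0:ℝ) ≤ (v-u)^κ := Real.rpow_nonneg hvu0.le _
    have hyinc : yy v - yy u = σ (yy u) (x v - x u)
        + (∑ i : Fin m, ∑ j : Fin m, X2 u v (i, j) • Dvf d m σ i j (yy u)) + R u v := by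
      simp only [hRdef]; abel
    have b1 : ‖σ (yy u) (x v - x u)‖ ≤ M * (G * (v-u)^γ) := opb _ _ _ (hxb u v hu huv hv)
    have b2 := hsumb u v hu huv hv (yy u)
    have b3 := RP u v hu huv hv hlen
    have g1 : (v-u)^γ ≤ T^(γ-κ) * (v-u)^κ := by
      have q1 : (v-u)^γ = (v-u)^(γ-κ) * (v-u)^κ := by
        rw [← Real.rpow_add hvu0]; ring_nf
      have q2 : (v-u)^(γ-κ) ≤ T^(γ-κ) :=
        Real.rpow_le_rpow hvu0.le hvuT (by linarith only [hκγ])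
      rw [q1]
      exact mul_le_mul_of_nonneg_right q2 hκnn
    have g2 : (v-u)^(2*γ) ≤ T^γ * (T^(γ-κ) * (v-u)^κ) := by
      have q1 : (v-u)^(2*γ) = (v-u)^γ * (v-u)^γ := by
        rw [show (2:ℝ)*γ = γ + γ by ring, Real.rpow_add hvu0]
      have q2 : (v-u)^γ ≤ T^γ := Real.rpow_le_rpow hvu0.le hvuT hγ0.le
      rw [q1]
      exact mul_le_mul q2 g1 (Real.rpow_nonneg hvu0.le _) hTγ.le
    have g3 : (v-u)^θ ≤ T^(θ-κ) * (v-u)^κ := by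
      have q1 : (v-u)^θ = (v-u)^(θ-κ) * (v-u)^κ := by
        rw [← Real.rpow_add hvu0]; ring_nf
      have q2 : (v-u)^(θ-κ) ≤ T^(θ-κ) :=
        Real.rpow_le_rpow hvu0.le hvuT (by linarith only [hκγ, hγθ])
      rw [q1]
      exact mul_le_mul_of_nonneg_right q2 hκnn
    rw [hyinc]
    calc ‖σ (yy u) (x v - x u)
          + (∑ i : Fin m, ∑ j : Fin m, X2 u v (i, j) • Dvf d m σ i j (yy u)) + R u v‖
        ≤ ‖σ (yy u) (x v - x u)‖
          + ‖∑ i : Fin m, ∑ j : Fin m, X2 u v (i, j) • Dvf d m σ i j (yy u)‖ + ‖R u v‖ :=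
          norm_add₃_le
      _ ≤ M * (G * (v-u)^γ) + (m:ℝ)^2 * (G*(v-u)^(2*γ)) * MD + G * (v-u)^θ :=
          add_le_add (add_le_add b1 b2) b3
      _ ≤ M * (G * (T^(γ-κ) * (v-u)^κ)) + (m:ℝ)^2 * (G*(T^γ * (T^(γ-κ) * (v-u)^κ))) * MD
          + G * (T^(θ-κ) * (v-u)^κ) := by
          have p1 : M * (G * (v-u)^γ) ≤ M * (G * (T^(γ-κ) * (v-u)^κ)) :=
            mul_le_mul_of_nonneg_left (mul_le_mul_of_nonneg_left g1 hG0.le) hM0.le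
          have p2 : (m:ℝ)^2 * (G*(v-u)^(2*γ)) * MD
              ≤ (m:ℝ)^2 * (G*(T^γ * (T^(γ-κ) * (v-u)^κ))) * MD := by
            have h9 : (0:ℝ) ≤ (m:ℝ)^2 * MD := mul_nonneg hm2 hMD0.le
            calc (m:ℝ)^2 * (G*(v-u)^(2*γ)) * MD = ((m:ℝ)^2*MD) * (G*(v-u)^(2*γ)) := by ring
              _ ≤ ((m:ℝ)^2*MD) * (G*(T^γ * (T^(γ-κ) * (v-u)^κ))) :=
                  mul_le_mul_of_nonneg_left (mul_le_mul_of_nonneg_left g2 hG0.le) h9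
              _ = (m:ℝ)^2 * (G*(T^γ * (T^(γ-κ) * (v-u)^κ))) * MD := by ring
          have p3 : G * (v-u)^θ ≤ G * (T^(θ-κ) * (v-u)^κ) :=
            mul_le_mul_of_nonneg_left g3 hG0.le
          linarith only [p1, p2, p3]
      _ = cB1 * G * (v-u)^κ := by rw [hcB1def]; ring
  have fine2 : ∀ u v : ℝ, 0 ≤ u → u < v → v ≤ T → v - u ≤ H₀ →
      ‖yy v - yy u - σ (yy u) (x v - x u)‖ ≤ cB2 * G * (v-u)^(2*κ) := by
    intro u v hu huv hv hlen
    have hvu0 : (0:ℝ) < v - u := by linarith only [huv]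
    have hvuT : v - u ≤ T := by linarith only [hlen, hH₀T]
    have hκnn : (0:ℝ) ≤ (v-u)^(2*κ) := Real.rpow_nonneg hvu0.le _
    have hWid : yy v - yy u - σ (yy u) (x v - x u)
        = (∑ i : Fin m, ∑ j : Fin m, X2 u v (i, j) • Dvf d m σ i j (yy u)) + R u v := by
      simp only [hRdef]; abel
    have b2 := hsumb u v hu huv hv (yy u)
    have b3 := RP u v hu huv hv hlen
    have g4 : (v-u)^(2*γ) ≤ T^(2*γ-2*κ) * (v-u)^(2*κ) := by
      have q1 : (v-u)^(2*γ) = (v-u)^(2*γ-2*κ) * (v-u)^(2*κ) := by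
        rw [← Real.rpow_add hvu0]; ring_nf
      have q2 : (v-u)^(2*γ-2*κ) ≤ T^(2*γ-2*κ) :=
        Real.rpow_le_rpow hvu0.le hvuT (by linarith only [hκγ])
      rw [q1]
      exact mul_le_mul_of_nonneg_right q2 hκnn
    have g5 : (v-u)^θ ≤ T^(θ-2*κ) * (v-u)^(2*κ) := by
      have q1 : (v-u)^θ = (v-u)^(θ-2*κ) * (v-u)^(2*κ) := by
        rw [← Real.rpow_add hvu0]; ring_nf
      have q2 : (v-u)^(θ-2*κ) ≤ T^(θ-2*κ) :=
        Real.rpow_le_rpow hvu0.le hvuT (by linarith only [h2κθ])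
      rw [q1]
      exact mul_le_mul_of_nonneg_right q2 hκnn
    rw [hWid]
    calc ‖(∑ i : Fin m, ∑ j : Fin m, X2 u v (i, j) • Dvf d m σ i j (yy u)) + R u v‖
        ≤ ‖∑ i : Fin m, ∑ j : Fin m, X2 u v (i, j) • Dvf d m σ i j (yy u)‖ + ‖R u v‖ :=
          norm_add_le _ _
      _ ≤ (m:ℝ)^2 * (G*(v-u)^(2*γ)) * MD + G * (v-u)^θ := add_le_add b2 b3
      _ ≤ (m:ℝ)^2 * (G*(T^(2*γ-2*κ) * (v-u)^(2*κ))) * MD + G * (T^(θ-2*κ) * (v-u)^(2*κ)) := by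
          have h9 : (0:ℝ) ≤ (m:ℝ)^2 * MD := mul_nonneg hm2 hMD0.le
          have p2 : (m:ℝ)^2 * (G*(v-u)^(2*γ)) * MD
              ≤ (m:ℝ)^2 * (G*(T^(2*γ-2*κ) * (v-u)^(2*κ))) * MD := by
            calc (m:ℝ)^2 * (G*(v-u)^(2*γ)) * MD = ((m:ℝ)^2*MD) * (G*(v-u)^(2*γ)) := by ring
              _ ≤ ((m:ℝ)^2*MD) * (G*(T^(2*γ-2*κ) * (v-u)^(2*κ))) :=
                  mul_le_mul_of_nonneg_left (mul_le_mul_of_nonneg_left g4 hG0.le) h9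
              _ = (m:ℝ)^2 * (G*(T^(2*γ-2*κ) * (v-u)^(2*κ))) * MD := by ring
          have p3 : G * (v-u)^θ ≤ G * (T^(θ-2*κ) * (v-u)^(2*κ)) :=
            mul_le_mul_of_nonneg_left g5 hG0.le
          linarith only [p2, p3]
      _ = cB2 * G * (v-u)^(2*κ) := by rw [hcB2def]; ring
  -- inverse scale bound
  have hinvH : 1/H₀ ≤ 1/T + cH^r' * G^(2*r') := by
    have hG2r : (1:ℝ) ≤ G^(2*r') := one_le_pow₀ hG1
    have hcHrG : (0:ℝ) ≤ cH^r' * G^(2*r') :=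
      mul_nonneg (pow_nonneg hcH0.le _) (pow_nonneg hG0.le _)
    have h1v0 : 1/v0 ≤ cH * G^2 := by
      rw [hv0def, one_div_div]
      have h2 : (1:ℝ)/min 1 (aa/cE) ≤ cH := by
        rcases le_total 1 (aa/cE) with hmm | hmm
        · rw [min_eq_left hmm]
          norm_num
          exact hcH1
        · rw [min_eq_right hmm, hcHdef, one_div_div]
          exact le_max_right _ _
      calc G^2/min 1 (aa/cE) = (1/min 1 (aa/cE)) * G^2 := by ring
        _ ≤ cH * G^2 := mul_le_mul_of_nonneg_right h2 (pow_nonneg hG0.le 2)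
    rcases le_total T (v0^r') with hmin | hmin
    · rw [hH₀def, min_eq_left hmin]
      linarith only [hcHrG]
    · rw [hH₀def, min_eq_right hmin]
      have h3 : 1/(v0^r') = (1/v0)^r' := by rw [one_div, one_div, inv_pow]
      have h4 : (1/v0)^r' ≤ (cH*G^2)^r' :=
        pow_le_pow_left₀ (by positivity) h1v0 r'
      have h5 : (cH*G^2)^r' = cH^r' * G^(2*r') := by
        rw [mul_pow, ← pow_mul]
      have h6 : (0:ℝ) ≤ 1/T := by positivity
      rw [h3]
      rw [h5] at h4
      linarith only [h4, h6]
  -- coarse-scale bound via chaining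
  have hcoarse : ∀ u v : ℝ, 0 ≤ u → u < v → v ≤ T → ‖yy v - yy u‖ ≤ cS * G^(2*r'+1) := by
    intro u v hu huv hv
    set Np : ℕ := ⌈(v-u)/H₀⌉₊ with hNpdef
    have hdivpos : 0 < (v-u)/H₀ := div_pos (by linarith only [huv]) hH₀pos
    have hNp1 : 0 < Np := by
      rw [hNpdef]
      exact Nat.ceil_pos.mpr hdivpos
    have hNpR : (0:ℝ) < (Np:ℝ) := by exact_mod_cast hNp1
    set gap : ℝ := (v-u)/Np with hgapdef
    have hgap0 : 0 < gap := div_pos (by linarith only [huv]) hNpR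
    have hNgap : (Np:ℝ) * gap = v - u := by
      rw [hgapdef]; field_simp
    have hgapH : gap ≤ H₀ := by
      rw [hgapdef, div_le_iff₀ hNpR]
      have h1 : (v-u)/H₀ ≤ (Np:ℝ) := Nat.le_ceil _
      calc v - u = ((v-u)/H₀) * H₀ := by field_simp
        _ ≤ (Np:ℝ) * H₀ := mul_le_mul_of_nonneg_right h1 hH₀pos.le
        _ = H₀ * (Np:ℝ) := mul_comm _ _
    have hpts : ∀ kk : ℕ, kk ≤ Np → u + kk * gap ≤ v := by
      intro kk hkk
      have h1 : (kk:ℝ) ≤ (Np:ℝ) := Nat.cast_le.mpr hkk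
      have h2 : (kk:ℝ) * gap ≤ (Np:ℝ) * gap := mul_le_mul_of_nonneg_right h1 hgap0.le
      linarith only [h2, hNgap]
    have htel : yy v - yy u = ∑ kk ∈ Finset.range Np, (yy (u + (kk+1:ℕ) * gap) - yy (u + kk * gap)) := by
      rw [Finset.sum_range_sub (fun kk : ℕ => yy (u + kk * gap)) Np]
      have h1 : u + (Np:ℝ) * gap = v := by linarith only [hNgap]
      have h2 : u + ((0:ℕ):ℝ) * gap = u := by norm_num
      rw [h1, h2]
    have hterm : ∀ kk ∈ Finset.range Np,
        ‖yy (u + (kk+1:ℕ) * gap) - yy (u + kk * gap)‖ ≤ cB1 * G := by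
      intro kk hkk
      have hkklt : kk < Np := Finset.mem_range.mp hkk
      have hc1 : ((kk+1:ℕ):ℝ) = (kk:ℝ) + 1 := by push_cast; ring
      have hp0 : (0:ℝ) ≤ u + kk * gap := by
        have : (0:ℝ) ≤ (kk:ℝ) * gap := mul_nonneg (Nat.cast_nonneg _) hgap0.le
        linarith only [hu, this]
      have hplt : u + kk * gap < u + (kk+1:ℕ) * gap := by
        rw [hc1]; linarith only [hgap0]
      have hpT : u + (kk+1:ℕ) * gap ≤ T := by
        have := hpts (kk+1) hkklt
        linarith only [this, hv]
      have hdiff : (u + (kk+1:ℕ) * gap) - (u + kk * gap) = gap := by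
        rw [hc1]; ring
      have h1 := fine1 (u + kk * gap) (u + (kk+1:ℕ) * gap) hp0 hplt hpT
        (by rw [hdiff]; exact hgapH)
      rw [hdiff] at h1
      have h2 : gap^κ ≤ 1 :=
        Real.rpow_le_one hgap0.le (le_trans hgapH hH₀1) hκ0.le
      have h3 : (0:ℝ) ≤ cB1 * G := mul_nonneg hcB10.le hG0.le
      calc ‖yy (u + (kk+1:ℕ) * gap) - yy (u + kk * gap)‖ ≤ cB1 * G * gap^κ := h1
        _ ≤ cB1 * G * 1 := mul_le_mul_of_nonneg_left h2 h3
        _ = cB1 * G := mul_one _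
    have hNpb : (Np:ℝ) ≤ (2 + T*cH^r') * G^(2*r') := by
      have h1 : (Np:ℝ) < (v-u)/H₀ + 1 := Nat.ceil_lt_add_one hdivpos.le
      have h2 : (v-u)/H₀ ≤ T/H₀ :=
        (div_le_div_iff_of_pos_right hH₀pos).mpr (by linarith only [hu, hv])
      have h3 : T/H₀ ≤ T*(1/T + cH^r' * G^(2*r')) := by
        rw [div_eq_mul_one_div]
        exact mul_le_mul_of_nonneg_left hinvH hT.le
      have h4 : T*(1/T + cH^r' * G^(2*r')) = 1 + T*cH^r'*G^(2*r') := by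
        field_simp
      have hG2r : (1:ℝ) ≤ G^(2*r') := one_le_pow₀ hG1
      have h5 : (2:ℝ) + T*cH^r'*G^(2*r') ≤ (2 + T*cH^r')*G^(2*r') := by
        have h6 : (2 + T*cH^r')*G^(2*r') = 2*G^(2*r') + T*cH^r'*G^(2*r') := by ring
        rw [h6]
        linarith only [hG2r]
      linarith only [h1, h2, h3, h4, h5]
    calc ‖yy v - yy u‖
        = ‖∑ kk ∈ Finset.range Np, (yy (u + (kk+1:ℕ) * gap) - yy (u + kk * gap))‖ := by
          rw [htel]
      _ ≤ ∑ kk ∈ Finset.range Np, ‖yy (u + (kk+1:ℕ) * gap) - yy (u + kk * gap)‖ :=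
          norm_sum_le _ _
      _ ≤ ∑ _kk ∈ Finset.range Np, cB1 * G := Finset.sum_le_sum hterm
      _ = (Np:ℝ) * (cB1 * G) := by
          rw [Finset.sum_const, Finset.card_range, nsmul_eq_mul]
      _ ≤ ((2 + T*cH^r') * G^(2*r')) * (cB1 * G) :=
          mul_le_mul_of_nonneg_right hNpb (mul_nonneg hcB10.le hG0.le)
      _ = cS * G^(2*r'+1) := by rw [hcSdef, pow_succ]; ring
  -- polynomial comparison
  have hchoose : ∀ KX : ℝ, (1+KX)^NN = ∑ i ∈ Finset.range (NN+1), KX^i * (NN.choose i:ℝ) := by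
    intro KX
    rw [add_comm (1:ℝ) KX, add_pow]
    refine Finset.sum_congr rfl fun i _ => ?_
    rw [one_pow, mul_one]
  have hpoly : CC * G^NN ≤ ∑ i ∈ Finset.range (NN+1), ∑ j ∈ Finset.range (NN+1),
      (CC * (NN.choose i:ℝ) * (NN.choose j:ℝ)) * K^i * X^j := by
    have hKX : (0:ℝ) ≤ K*X := mul_nonneg hK0 hX0
    have h1 : G ≤ (1+K)*(1+X) := by
      have h2 : (1+K)*(1+X) = 1+K+X+K*X := by ring
      rw [hGdef, h2]; linarith only [hKX]
    have h2 : G^NN ≤ ((1+K)*(1+X))^NN := pow_le_pow_left₀ hG0.le h1 NN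
    have h3 : ((1+K)*(1+X))^NN = (1+K)^NN * (1+X)^NN := mul_pow _ _ _
    calc CC * G^NN ≤ CC * ((1+K)^NN * (1+X)^NN) := by
          rw [← h3]; exact mul_le_mul_of_nonneg_left h2 hCC0.le
      _ = CC * ((∑ i ∈ Finset.range (NN+1), K^i * (NN.choose i:ℝ))
            * (∑ j ∈ Finset.range (NN+1), X^j * (NN.choose j:ℝ))) := by
          rw [hchoose K, hchoose X]
      _ = ∑ i ∈ Finset.range (NN+1), ∑ j ∈ Finset.range (NN+1),
            (CC * (NN.choose i:ℝ) * (NN.choose j:ℝ)) * K^i * X^j := by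
          rw [Finset.sum_mul_sum, Finset.mul_sum]
          refine Finset.sum_congr rfl fun i _ => ?_
          rw [Finset.mul_sum]
          refine Finset.sum_congr rfl fun j _ => ?_
          ring
  have hGNN : G ≤ G^NN := le_self_pow₀ hG1 (by rw [hNNdef]; omega)
  have hcB1CC : cB1 ≤ CC := by rw [hCCdef]; linarith only [hcB20, hcB1'0, hcB2'0]
  have hcB2CC : cB2 ≤ CC := by rw [hCCdef]; linarith only [hcB10, hcB1'0, hcB2'0]
  have hcB1'CC : cB1' ≤ CC := by rw [hCCdef]; linarith only [hcB10, hcB20, hcB2'0]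
  have hcB2'CC : cB2' ≤ CC := by rw [hCCdef]; linarith only [hcB10, hcB20, hcB1'0]
  have hfine1CC : cB1 * G ≤ CC * G^NN := mul_le_mul hcB1CC hGNN hG0.le hCC0.le
  have hfine2CC : cB2 * G ≤ CC * G^NN := mul_le_mul hcB2CC hGNN hG0.le hCC0.le
  -- final assembly
  intro s t hs hst htT
  rcases eq_or_lt_of_le hst with heq | hlt
  · subst heq
    constructor
    · simp only [sub_self, norm_zero, Real.zero_rpow hκ0.ne', zero_mul, le_refl]
    · simp only [sub_self, map_zero, sub_zero, norm_zero,
        Real.zero_rpow (show (2*κ:ℝ) ≠ 0 by positivity), zero_mul, le_refl]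
  · have hts0 : (0:ℝ) < t - s := by linarith only [hlt]
    have hκrnn : (0:ℝ) ≤ (t-s)^κ := Real.rpow_nonneg hts0.le _
    have h2κrnn : (0:ℝ) ≤ (t-s)^(2*κ) := Real.rpow_nonneg hts0.le _
    have hκ1' : (1:ℝ) ≤ H₀^(κ-1) := by
      have h1 := Real.rpow_le_rpow_of_exponent_ge hH₀pos hH₀1
        (show κ-1 ≤ 0 by linarith only [hκ1])
      rwa [Real.rpow_zero] at h1
    constructor
    · by_cases hsmall : t - s ≤ H₀
      · have h1 := fine1 s t hs hlt htT hsmall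
        calc ‖yy t - yy s‖ ≤ cB1 * G * (t-s)^κ := h1
          _ = (t-s)^κ * (cB1 * G) := by ring
          _ ≤ (t-s)^κ * (CC * G^NN) := mul_le_mul_of_nonneg_left hfine1CC hκrnn
          _ ≤ (t-s)^κ * ∑ i ∈ Finset.range (NN+1), ∑ j ∈ Finset.range (NN+1),
                (CC * (NN.choose i:ℝ) * (NN.choose j:ℝ)) * K^i * X^j :=
              mul_le_mul_of_nonneg_left hpoly hκrnn
      · push_neg at hsmall
        have hfac : (1:ℝ) ≤ (t-s)^κ * (1/T + cH^r' * G^(2*r')) := by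
          have a1 : H₀^κ ≤ (t-s)^κ := Real.rpow_le_rpow hH₀pos.le hsmall.le hκ0.le
          have a2 : H₀^κ * (1/H₀) = H₀^(κ-1) := by
            rw [Real.rpow_sub hH₀pos, Real.rpow_one, mul_one_div]
          have a4 : H₀^κ * (1/H₀) ≤ (t-s)^κ * (1/T + cH^r'*G^(2*r')) :=
            mul_le_mul a1 hinvH (by positivity) hκrnn
          calc (1:ℝ) ≤ H₀^(κ-1) := hκ1'
            _ = H₀^κ * (1/H₀) := a2.symm
            _ ≤ (t-s)^κ * (1/T + cH^r'*G^(2*r')) := a4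
        have h1 := hcoarse s t hs hlt htT
        have hgpow1 : (1/T + cH^r'*G^(2*r')) * (cS*G^(2*r'+1)) ≤ cB1' * G^NN := by
          have hG2r : (1:ℝ) ≤ G^(2*r') := one_le_pow₀ hG1
          have b1 : 1/T + cH^r'*G^(2*r') ≤ (1/T + cH^r')*G^(2*r') := by
            have e : (1/T + cH^r')*G^(2*r') = (1/T)*G^(2*r') + cH^r'*G^(2*r') := by ring
            rw [e]
            have h6 : (1/T:ℝ) ≤ (1/T)*G^(2*r') := le_mul_of_one_le_right (by positivity) hG2r
            linarith only [h6]
          have b2 : (0:ℝ) ≤ cS*G^(2*r'+1) := mul_nonneg hcS0.le (pow_nonneg hG0.le _)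
          have b3 : G^(2*r') * G^(2*r'+1) = G^(4*r'+1) := by
            rw [← pow_add]
            congr 1
            omega
          calc (1/T + cH^r'*G^(2*r')) * (cS*G^(2*r'+1))
              ≤ ((1/T + cH^r')*G^(2*r')) * (cS*G^(2*r'+1)) := mul_le_mul_of_nonneg_right b1 b2
            _ = cB1' * (G^(2*r') * G^(2*r'+1)) := by rw [hcB1'def]; ring
            _ = cB1' * G^(4*r'+1) := by rw [b3]
            _ ≤ cB1' * G^NN :=
                mul_le_mul_of_nonneg_left
                  (pow_le_pow_right₀ hG1 (by rw [hNNdef]; omega)) hcB1'0.le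
        calc ‖yy t - yy s‖ ≤ cS * G^(2*r'+1) := h1
          _ ≤ ((t-s)^κ * (1/T + cH^r'*G^(2*r'))) * (cS * G^(2*r'+1)) :=
              le_mul_of_one_le_left (mul_nonneg hcS0.le (pow_nonneg hG0.le _)) hfac
          _ = (t-s)^κ * ((1/T + cH^r'*G^(2*r')) * (cS * G^(2*r'+1))) := by ring
          _ ≤ (t-s)^κ * (cB1' * G^NN) := mul_le_mul_of_nonneg_left hgpow1 hκrnn
          _ ≤ (t-s)^κ * (CC*G^NN) :=
              mul_le_mul_of_nonneg_left
                (mul_le_mul_of_nonneg_right hcB1'CC (pow_nonneg hG0.le _)) hκrnn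
          _ ≤ (t-s)^κ * ∑ i ∈ Finset.range (NN+1), ∑ j ∈ Finset.range (NN+1),
                (CC * (NN.choose i:ℝ) * (NN.choose j:ℝ)) * K^i * X^j :=
              mul_le_mul_of_nonneg_left hpoly hκrnn
    · by_cases hsmall : t - s ≤ H₀
      · have h1 := fine2 s t hs hlt htT hsmall
        calc ‖yy t - yy s - σ (yy s) (x t - x s)‖ ≤ cB2 * G * (t-s)^(2*κ) := h1
          _ = (t-s)^(2*κ) * (cB2 * G) := by ring
          _ ≤ (t-s)^(2*κ) * (CC * G^NN) := mul_le_mul_of_nonneg_left hfine2CC h2κrnn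
          _ ≤ (t-s)^(2*κ) * ∑ i ∈ Finset.range (NN+1), ∑ j ∈ Finset.range (NN+1),
                (CC * (NN.choose i:ℝ) * (NN.choose j:ℝ)) * K^i * X^j :=
              mul_le_mul_of_nonneg_left hpoly h2κrnn
      · push_neg at hsmall
        have h1 := hcoarse s t hs hlt htT
        have h2 : ‖σ (yy s) (x t - x s)‖ ≤ M * (G*(t-s)^γ) := opb _ _ _ (hxb s t hs hlt htT)
        have h3 : ‖yy t - yy s - σ (yy s) (x t - x s)‖ ≤ cS*G^(2*r'+1) + M*(G*(t-s)^γ) :=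
          (norm_sub_le _ _).trans (add_le_add h1 h2)
        have h4 : M*(G*(t-s)^γ) ≤ M*T^γ*G^(2*r'+1) := by
          have a1 : (t-s)^γ ≤ T^γ :=
            Real.rpow_le_rpow hts0.le (by linarith only [hs, htT]) hγ0.le
          have a2 : G ≤ G^(2*r'+1) := le_self_pow₀ hG1 (by omega)
          calc M*(G*(t-s)^γ) = M*(t-s)^γ*G := by ring
            _ ≤ M*T^γ*G := by
                refine mul_le_mul_of_nonneg_right ?_ hG0.le
                exact mul_le_mul_of_nonneg_left a1 hM0.le
            _ ≤ M*T^γ*G^(2*r'+1) :=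
                mul_le_mul_of_nonneg_left a2 (mul_nonneg hM0.le hTγ.le)
        have h5 : ‖yy t - yy s - σ (yy s) (x t - x s)‖ ≤ cS2*G^(2*r'+1) := by
          have e : cS2*G^(2*r'+1) = cS*G^(2*r'+1) + M*T^γ*G^(2*r'+1) := by
            rw [hcS2def]; ring
          rw [e]
          linarith only [h3, h4]
        have hfac2 : (1:ℝ) ≤ (t-s)^(2*κ) * (1/T + cH^r'*G^(2*r'))^2 := by
          have a1 : H₀^(2*κ) ≤ (t-s)^(2*κ) :=
            Real.rpow_le_rpow hH₀pos.le hsmall.le (by linarith only [hκ0])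
          have a2 : ((1:ℝ)/H₀)^2 ≤ (1/T + cH^r'*G^(2*r'))^2 :=
            pow_le_pow_left₀ (by positivity) hinvH 2
          have a3 : H₀^(2*κ) * ((1:ℝ)/H₀)^2 = (H₀^(κ-1))^2 := by
            rw [Real.rpow_sub hH₀pos, Real.rpow_one,
              show (2:ℝ)*κ = κ+κ by ring, Real.rpow_add hH₀pos]
            field_simp
          have a4 : (1:ℝ) ≤ (H₀^(κ-1))^2 := one_le_pow₀ hκ1'
          have a5 : H₀^(2*κ) * ((1:ℝ)/H₀)^2 ≤ (t-s)^(2*κ) * (1/T + cH^r'*G^(2*r'))^2 :=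
            mul_le_mul a1 a2 (by positivity) h2κrnn
          linarith only [a4, a5, a3.symm.le, a3.le]
        have hgpow2 : (1/T + cH^r'*G^(2*r'))^2 * (cS2*G^(2*r'+1)) ≤ cB2' * G^NN := by
          have hG4r : (1:ℝ) ≤ G^(4*r') := one_le_pow₀ hG1
          have e2 : ((1:ℝ)/T)^2 = 1/T^2 := by rw [div_pow, one_pow]
          have e3 : (cH^r'*G^(2*r'))^2 = cH^(2*r')*G^(4*r') := by
            rw [mul_pow, ← pow_mul, ← pow_mul]
            congr 2 <;> omega
          have e1 : ((1:ℝ)/T + cH^r'*G^(2*r'))^2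
              ≤ 2*(1/T^2 + cH^(2*r')*G^(4*r')) := by
            have h6 := sq_nonneg ((1:ℝ)/T - cH^r'*G^(2*r'))
            have h7 : ((1:ℝ)/T + cH^r'*G^(2*r'))^2
                = ((1:ℝ)/T)^2 + 2*((1:ℝ)/T)*(cH^r'*G^(2*r')) + (cH^r'*G^(2*r'))^2 := by ring
            have h8 : ((1:ℝ)/T - cH^r'*G^(2*r'))^2
                = ((1:ℝ)/T)^2 - 2*((1:ℝ)/T)*(cH^r'*G^(2*r')) + (cH^r'*G^(2*r'))^2 := by ring
            rw [h7]
            rw [h8] at h6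
            rw [e2] at *
            rw [e3] at *
            linarith only [h6]
          have b1 : 2*((1:ℝ)/T^2 + cH^(2*r')*G^(4*r')) ≤ 2*(1/T^2 + cH^(2*r'))*G^(4*r') := by
            have h6 : (1:ℝ)/T^2 ≤ (1/T^2)*G^(4*r') := le_mul_of_one_le_right (by positivity) hG4r
            have h7 : 2*((1:ℝ)/T^2 + cH^(2*r'))*G^(4*r')
                = 2*((1/T^2)*G^(4*r')) + 2*(cH^(2*r')*G^(4*r')) := by ring
            rw [h7]
            linarith only [h6]
          have b2 : (0:ℝ) ≤ cS2*G^(2*r'+1) := mul_nonneg hcS20.le (pow_nonneg hG0.le _)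
          have b3 : G^(4*r') * G^(2*r'+1) = G^NN := by
            rw [← pow_add]
            congr 1
            rw [hNNdef]
            omega
          calc (1/T + cH^r'*G^(2*r'))^2 * (cS2*G^(2*r'+1))
              ≤ (2*(1/T^2 + cH^(2*r'))*G^(4*r')) * (cS2*G^(2*r'+1)) :=
                mul_le_mul_of_nonneg_right (e1.trans b1) b2
            _ = cB2' * (G^(4*r') * G^(2*r'+1)) := by rw [hcB2'def]; ring
            _ = cB2' * G^NN := by rw [b3]
        calc ‖yy t - yy s - σ (yy s) (x t - x s)‖ ≤ cS2 * G^(2*r'+1) := h5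
          _ ≤ ((t-s)^(2*κ) * (1/T + cH^r'*G^(2*r'))^2) * (cS2 * G^(2*r'+1)) :=
              le_mul_of_one_le_left (mul_nonneg hcS20.le (pow_nonneg hG0.le _)) hfac2
          _ = (t-s)^(2*κ) * ((1/T + cH^r'*G^(2*r'))^2 * (cS2 * G^(2*r'+1))) := by ring
          _ ≤ (t-s)^(2*κ) * (cB2' * G^NN) := mul_le_mul_of_nonneg_left hgpow2 h2κrnn
          _ ≤ (t-s)^(2*κ) * (CC*G^NN) :=
              mul_le_mul_of_nonneg_left
                (mul_le_mul_of_nonneg_right hcB2'CC (pow_nonneg hG0.le _)) h2κrnn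
          _ ≤ (t-s)^(2*κ) * ∑ i ∈ Finset.range (NN+1), ∑ j ∈ Finset.range (NN+1),
                (CC * (NN.choose i:ℝ) * (NN.choose j:ℝ)) * K^i * X^j :=
              mul_le_mul_of_nonneg_left hpoly h2κrnn

end
end

section
/- Hölder error of piecewise linear interpolation under a log-modulus of continuity (deterministic content of Lemma 3.3): Let 0 < H ≤ 1, 0 ≤ γ < H, T > 0, K ≥ 0 and h* ∈ (0, min(T, e^{−1})]. Let f : [0,T] → ℝ^m be continuous with |f(t) − f(s)| ≤ K (t−s)^H √(log(1/(t−s))) whenever 0 < t−s ≤ h*. For n ∈ ℕ let f^n be the piecewise linear interpolation of f on the uniform grid {kT/n : k = 0,…,n}, i.e. f^n(t) = f(t_k) + ((t−t_k)/(T/n))(f(t_{k+1}) − f(t_k)) for t ∈ [t_k, t_{k+1}], t_k = kT/n. Then there exist a constant C > 0 and N₀ ∈ ℕ, depending only on H, γ, T, h*, such that for all n ≥ N₀: sup_{t∈[0,T]} |f^n(t) − f(t)| + sup_{0≤s<t≤T} |(f^n(t) − f(t)) − (f^n(s) − f(s))|/(t−s)^γ ≤ C K √(log n) · n^{−(H−γ)}.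 -/
open Set
open scoped ENNReal

noncomputable section

/-- The piecewise linear interpolation of `f` on the uniform grid `{kT/n : k = 0,…,n}`:
for `t ∈ [t_k, t_{k+1}]`, `f^n(t) = f(t_k) + ((t - t_k)/(T/n)) (f(t_{k+1}) - f(t_k))`. -/
noncomputable def interp {E : Type*} [NormedAddCommGroup E] [NormedSpace ℝ E]
    (T : ℝ) (n : ℕ) (f : ℝ → E) (t : ℝ) : E :=
  f ((⌊t * n / T⌋ : ℝ) * T / n) +
    ((t - (⌊t * n / T⌋ : ℝ) * T / n) / (T / n)) •
      (f (((⌊t * n / T⌋ : ℝ) + 1) * T / n) - f ((⌊t * n / T⌋ : ℝ) * T / n))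

/- ### Auxiliary lemmas -/

lemma my_sqrt_add_le (x y : ℝ) (hx : 0 ≤ x) (hy : 0 ≤ y) :
    Real.sqrt (x + y) ≤ Real.sqrt x + Real.sqrt y := by
  have h : x + y ≤ (Real.sqrt x + Real.sqrt y) ^ 2 := by
    nlinarith [Real.sq_sqrt hx, Real.sq_sqrt hy, Real.sqrt_nonneg x, Real.sqrt_nonneg y]
  calc Real.sqrt (x + y) ≤ Real.sqrt ((Real.sqrt x + Real.sqrt y) ^ 2) := Real.sqrt_le_sqrt h
  _ = Real.sqrt x + Real.sqrt y := Real.sqrt_sq (by positivity)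

lemma my_exp_mul_sqrt (a v : ℝ) (ha : 0 < a) (hv : 0 ≤ v) :
    Real.exp (-(a * v)) * Real.sqrt v ≤ 1 / Real.sqrt a := by
  have hsa : 0 < Real.sqrt a := Real.sqrt_pos.2 ha
  have h1 : v ≤ Real.exp (a * v) / a := by
    rw [le_div_iff₀ ha]
    nlinarith [Real.add_one_le_exp (a * v)]
  have h2 : Real.sqrt v ≤ Real.exp (a * v / 2) / Real.sqrt a := by
    calc Real.sqrt v ≤ Real.sqrt (Real.exp (a * v) / a) := Real.sqrt_le_sqrt h1
    _ = Real.exp (a * v / 2) / Real.sqrt a := by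
        rw [Real.sqrt_div (Real.exp_nonneg _), ← Real.exp_half]
  calc Real.exp (-(a * v)) * Real.sqrt v
      ≤ Real.exp (-(a * v)) * (Real.exp (a * v / 2) / Real.sqrt a) :=
        mul_le_mul_of_nonneg_left h2 (Real.exp_nonneg _)
  _ = Real.exp (-(a * v) + a * v / 2) / Real.sqrt a := by
        rw [Real.exp_add]; ring
  _ ≤ 1 / Real.sqrt a := by
        gcongr
        · exact Real.exp_le_one_iff.2 (by nlinarith)

lemma my_modulus_mono (a u h : ℝ) (ha : 0 < a) (hu : 0 < u) (huh : u ≤ h)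
    (hh : h ≤ Real.exp (-1)) :
    u ^ a * Real.sqrt (Real.log (1/u)) ≤
      (1 + 1/Real.sqrt a) * (h ^ a * Real.sqrt (Real.log (1/h))) := by
  have hh0 : 0 < h := lt_of_lt_of_le hu huh
  set L := Real.log (1/h) with hLdef
  set v := Real.log (h/u) with hvdef
  have hL1 : 1 ≤ L := by
    rw [hLdef, one_div]
    rw [Real.le_log_iff_exp_le (by positivity)]
    rw [Real.exp_neg] at hh
    exact (le_inv_comm₀ (Real.exp_pos 1) hh0).2 hh
  have hL0 : 0 ≤ L := le_trans zero_le_one hL1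
  have hv0 : 0 ≤ v := Real.log_nonneg ((one_le_div hu).2 huh)
  have hlogu : Real.log (1/u) = L + v := by
    rw [hLdef, hvdef, one_div, one_div, Real.log_inv, Real.log_inv,
      Real.log_div (ne_of_gt hh0) (ne_of_gt hu)]
    ring
  have hvval : v = Real.log h - Real.log u := Real.log_div (ne_of_gt hh0) (ne_of_gt hu)
  have hueq : u ^ a = h ^ a * Real.exp (-(a * v)) := by
    rw [Real.rpow_def_of_pos hu, Real.rpow_def_of_pos hh0, ← Real.exp_add, hvval]
    ring_nf
  have hE0 : (0:ℝ) < Real.exp (-(a * v)) := Real.exp_pos _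
  have hE1 : Real.exp (-(a * v)) ≤ 1 := Real.exp_le_one_iff.2 (by nlinarith)
  have hP : Real.exp (-(a * v)) * Real.sqrt v ≤ 1 / Real.sqrt a := my_exp_mul_sqrt a v ha hv0
  have hsplit : Real.sqrt (L + v) ≤ Real.sqrt L + Real.sqrt v := my_sqrt_add_le L v hL0 hv0
  have hsL : 1 ≤ Real.sqrt L := by
    rw [show (1:ℝ) = Real.sqrt 1 from (Real.sqrt_one).symm]
    exact Real.sqrt_le_sqrt hL1
  have hA : 0 < h ^ a := Real.rpow_pos_of_pos hh0 a
  have hsa : 0 < Real.sqrt a := Real.sqrt_pos.2 ha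
  rw [hlogu, hueq]
  calc h ^ a * Real.exp (-(a*v)) * Real.sqrt (L + v)
      ≤ h ^ a * Real.exp (-(a*v)) * (Real.sqrt L + Real.sqrt v) := by
        apply mul_le_mul_of_nonneg_left hsplit (by positivity)
  _ = h ^ a * (Real.exp (-(a*v)) * Real.sqrt L) + h ^ a * (Real.exp (-(a*v)) * Real.sqrt v) := by
        ring
  _ ≤ h ^ a * Real.sqrt L + h ^ a * (1 / Real.sqrt a) := by
        gcongr
        · nlinarith [Real.sqrt_nonneg L]
  _ ≤ h ^ a * Real.sqrt L + h ^ a * (Real.sqrt L * (1 / Real.sqrt a)) := by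
        gcongr
        have := mul_le_mul_of_nonneg_right hsL (le_of_lt (one_div_pos.2 hsa))
        linarith
  _ = (1 + 1/Real.sqrt a) * (h ^ a * Real.sqrt L) := by ring

lemma interp_grid {E : Type*} [NormedAddCommGroup E] [NormedSpace ℝ E]
    (T : ℝ) (n : ℕ) (hT : 0 < T) (hn : 0 < n) (f : ℝ → E) (k : ℕ) :
    interp T n f ((k:ℝ) * (T/n)) = f ((k:ℝ) * (T/n)) := by
  have hn' : (0:ℝ) < n := Nat.cast_pos.2 hn
  have hfl : ⌊(k:ℝ) * (T/n) * n / T⌋ = (k:ℤ) := by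
    have h1 : (k:ℝ) * (T/n) * n / T = (k:ℝ) := by field_simp
    rw [h1]
    exact_mod_cast Int.floor_natCast k
  unfold interp
  rw [hfl]
  push_cast
  simp only [mul_div_assoc]
  rw [sub_self, zero_div, zero_smul, add_zero]

lemma interp_piece {E : Type*} [NormedAddCommGroup E] [NormedSpace ℝ E]
    (T : ℝ) (n : ℕ) (hT : 0 < T) (hn : 0 < n) (f : ℝ → E) (k : ℕ)
    (t : ℝ) (h1 : (k:ℝ) * (T/n) ≤ t) (h2 : t ≤ ((k:ℝ)+1) * (T/n)) :
    interp T n f t = f ((k:ℝ) * (T/n)) +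
      ((t - (k:ℝ) * (T/n)) / (T/n)) • (f (((k:ℝ)+1) * (T/n)) - f ((k:ℝ) * (T/n))) := by
  have hn' : (0:ℝ) < n := Nat.cast_pos.2 hn
  have hh : (0:ℝ) < T/n := div_pos hT hn'
  rcases eq_or_lt_of_le h2 with he | hlt
  · have hfl : ⌊t * n / T⌋ = (k:ℤ) + 1 := by
      have h1' : t * n / T = (k:ℝ) + 1 := by rw [he]; field_simp
      rw [h1']
      have : ((k:ℝ) + 1) = (((k:ℤ) + 1 : ℤ) : ℝ) := by push_cast; ring
      rw [this, Int.floor_intCast]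
    unfold interp
    rw [hfl]
    push_cast
    simp only [mul_div_assoc]
    rw [he, sub_self, zero_div, zero_smul, add_zero]
    have e1 : ((k:ℝ)+1) * (T/n) - (k:ℝ) * (T/n) = T/n := by ring
    rw [e1, div_self hh.ne', one_smul]
    abel
  · have hfl : ⌊t * n / T⌋ = (k:ℤ) := by
      rw [show t * n / T = t/(T/n) from (div_div_eq_mul_div t T n).symm]
      rw [Int.floor_eq_iff]
      constructor
      · push_cast
        rw [le_div_iff₀ hh]
        linarith
      · push_cast
        rw [div_lt_iff₀ hh]
        linarith
    unfold interp
    rw [hfl]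
    push_cast
    simp only [mul_div_assoc]

lemma exists_cell (T : ℝ) (n : ℕ) (hT : 0 < T) (hn : 0 < n)
    (t : ℝ) (ht0 : 0 ≤ t) (htT : t ≤ T) :
    ∃ k : ℕ, k < n ∧ (k:ℝ) * (T/n) ≤ t ∧ t ≤ ((k:ℝ)+1) * (T/n) := by
  have hn' : (0:ℝ) < n := Nat.cast_pos.2 hn
  have hh : (0:ℝ) < T/n := div_pos hT hn'
  have hTn : (n:ℝ) * (T/n) = T := by field_simp
  by_cases hc : t = T
  · refine ⟨n-1, Nat.sub_lt hn one_pos, ?_, ?_⟩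
    · have hcast : ((n-1:ℕ):ℝ) = (n:ℝ) - 1 := by
        have h1 : (1:ℕ) ≤ n := hn
        push_cast [h1]
        ring
      rw [hcast, hc]
      nlinarith
    · have hcast : ((n-1:ℕ):ℝ) = (n:ℝ) - 1 := by
        have h1 : (1:ℕ) ≤ n := hn
        push_cast [h1]
        ring
      rw [hcast, hc]
      nlinarith
  · have htT' : t < T := lt_of_le_of_ne htT hc
    have hj0 : 0 ≤ ⌊t/(T/n)⌋ := Int.floor_nonneg.2 (by positivity)
    have hc1 : ((⌊t/(T/n)⌋.toNat : ℕ) : ℝ) = ((⌊t/(T/n)⌋ : ℤ) : ℝ) := by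
      exact_mod_cast congrArg (fun z : ℤ => (z : ℝ)) (Int.toNat_of_nonneg hj0)
    have hfl : ((⌊t/(T/n)⌋.toNat : ℕ) : ℝ) ≤ t/(T/n) := by
      rw [hc1]; exact Int.floor_le _
    have hfl2 : t/(T/n) < ((⌊t/(T/n)⌋.toNat : ℕ) : ℝ) + 1 := by
      rw [hc1]; exact Int.lt_floor_add_one _
    refine ⟨⌊t/(T/n)⌋.toNat, ?_, ?_, ?_⟩
    · have h2 : t/(T/n) < n := by
        rw [div_lt_iff₀ hh]
        nlinarith
      exact_mod_cast lt_of_le_of_lt hfl h2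
    · exact (le_div_iff₀ hh).1 hfl
    · have := (div_lt_iff₀ hh).1 hfl2
      nlinarith

lemma cell_bound {E : Type*} [NormedAddCommGroup E] [NormedSpace ℝ E]
    (H γ T hstar K : ℝ) (f : ℝ → E)
    (hH0 : 0 < H) (hH1 : H ≤ 1) (hγ0 : 0 ≤ γ) (hγH : γ < H) (hT : 0 < T) (hK : 0 ≤ K)
    (hf : ∀ s t : ℝ, 0 ≤ s → s < t → t ≤ T → t - s ≤ hstar →
      ‖f t - f s‖ ≤ K * (t - s) ^ H * Real.sqrt (Real.log (1 / (t - s))))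
    (n : ℕ) (hn : 0 < n) (hhs : T/n ≤ hstar) (hhe : T/n ≤ Real.exp (-1))
    (k : ℕ) (hk : k < n) (s t : ℝ)
    (hs1 : (k:ℝ) * (T/n) ≤ s) (hst : s < t) (ht2 : t ≤ ((k:ℝ)+1) * (T/n)) :
    ‖(interp T n f t - f t) - (interp T n f s - f s)‖ ≤
      (2 + 1/Real.sqrt (H-γ)) * K * (t - s) ^ γ *
        ((T/n) ^ (H-γ) * Real.sqrt (Real.log (1/(T/n)))) := by
  have hn' : (0:ℝ) < n := Nat.cast_pos.2 hn
  set h := T/n with hhdef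
  have hh : (0:ℝ) < h := div_pos hT hn'
  have hkh0 : (0:ℝ) ≤ (k:ℝ) * h := by positivity
  have hs0 : 0 ≤ s := le_trans hkh0 hs1
  have hk1n : ((k:ℝ)+1) ≤ n := by exact_mod_cast Nat.succ_le_of_lt hk
  have htT : t ≤ T := by
    calc t ≤ ((k:ℝ)+1) * h := ht2
    _ ≤ (n:ℝ) * h := by apply mul_le_mul_of_nonneg_right hk1n hh.le
    _ = T := by rw [hhdef]; field_simp
  have htsh : t - s ≤ h := by nlinarith
  have hts0 : 0 < t - s := sub_pos.2 hst
  set Δ := f (((k:ℝ)+1) * h) - f ((k:ℝ) * h) with hΔ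
  set L := Real.sqrt (Real.log (1/h)) with hLdef
  have hL0 : 0 ≤ L := Real.sqrt_nonneg _
  have key : (interp T n f t - f t) - (interp T n f s - f s)
      = ((t - s)/h) • Δ - (f t - f s) := by
    rw [interp_piece T n hT hn f k t (le_trans hs1 (le_of_lt hst)) ht2,
      interp_piece T n hT hn f k s hs1 (le_trans (le_of_lt hst) ht2)]
    have heq : (t - (k:ℝ)*h)/h - (s - (k:ℝ)*h)/h = (t-s)/h := by ring
    rw [← hΔ, show (t - s)/h = (t - (k:ℝ)*h)/h - (s - (k:ℝ)*h)/h from heq.symm, sub_smul]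
    abel
  rw [key]
  have hΔb : ‖Δ‖ ≤ K * h ^ H * L := by
    have h1 : (k:ℝ)*h < ((k:ℝ)+1)*h := by nlinarith
    have h2 : ((k:ℝ)+1)*h ≤ T := by
      calc ((k:ℝ)+1) * h ≤ (n:ℝ) * h := by apply mul_le_mul_of_nonneg_right hk1n hh.le
      _ = T := by rw [hhdef]; field_simp
    have h3 : ((k:ℝ)+1)*h - (k:ℝ)*h = h := by ring
    have hb := hf ((k:ℝ)*h) (((k:ℝ)+1)*h) hkh0 h1 h2 (by rw [h3]; exact hhs)
    rw [h3] at hb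
    exact hb
  have ha1 : (t-s)/h ≤ 1 := by rw [div_le_one hh]; exact htsh
  have ha0 : 0 < (t-s)/h := div_pos hts0 hh
  have haγ : (t-s)/h ≤ ((t-s)/h) ^ γ := by
    nth_rewrite 1 [show (t-s)/h = ((t-s)/h) ^ (1:ℝ) from (Real.rpow_one _).symm]
    exact Real.rpow_le_rpow_of_exponent_ge ha0 ha1 (le_trans (le_of_lt hγH) hH1)
  have hdiv : ((t-s)/h) ^ γ = (t-s) ^ γ / h ^ γ := Real.div_rpow hts0.le hh.le γ
  have hsub : h ^ (H - γ) = h ^ H / h ^ γ := Real.rpow_sub hh H γ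
  have hterm1 : ‖((t - s)/h) • Δ‖ ≤ K * (t-s) ^ γ * (h ^ (H-γ) * L) := by
    rw [norm_smul, Real.norm_eq_abs, abs_of_pos ha0]
    calc ((t-s)/h) * ‖Δ‖ ≤ ((t-s)/h) ^ γ * (K * h ^ H * L) := by
          apply mul_le_mul haγ hΔb (norm_nonneg _) (by positivity)
    _ = K * (t-s) ^ γ * (h ^ (H-γ) * L) := by
          rw [hdiv, hsub]
          field_simp
  have hterm2 : ‖f t - f s‖ ≤
      (1 + 1/Real.sqrt (H-γ)) * K * (t-s) ^ γ * (h ^ (H-γ) * L) := by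
    have hb := hf s t hs0 hst htT (le_trans htsh hhs)
    have hsplit : (t-s) ^ H = (t-s) ^ γ * (t-s) ^ (H-γ) := by
      rw [← Real.rpow_add hts0]; ring_nf
    have hmono := my_modulus_mono (H-γ) (t-s) h (by linarith) hts0 htsh hhe
    calc ‖f t - f s‖ ≤ K * (t - s) ^ H * Real.sqrt (Real.log (1/(t-s))) := hb
    _ = K * (t-s) ^ γ * ((t-s) ^ (H-γ) * Real.sqrt (Real.log (1/(t-s)))) := by
        rw [hsplit]; ring
    _ ≤ K * (t-s) ^ γ * ((1 + 1/Real.sqrt (H-γ)) * (h ^ (H-γ) * L)) := by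
        apply mul_le_mul_of_nonneg_left hmono (by positivity)
    _ = (1 + 1/Real.sqrt (H-γ)) * K * (t-s) ^ γ * (h ^ (H-γ) * L) := by ring
  calc ‖((t - s)/h) • Δ - (f t - f s)‖ ≤ ‖((t - s)/h) • Δ‖ + ‖f t - f s‖ := norm_sub_le _ _
  _ ≤ K * (t-s) ^ γ * (h ^ (H-γ) * L) +
      (1 + 1/Real.sqrt (H-γ)) * K * (t-s) ^ γ * (h ^ (H-γ) * L) := add_le_add hterm1 hterm2
  _ = (2 + 1/Real.sqrt (H-γ)) * K * (t - s) ^ γ * (h ^ (H-γ) * L) := by ring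

set_option maxHeartbeats 2000000 in
/-- **Hölder error of piecewise linear interpolation under a log-modulus of continuity.**
If `|f(t) - f(s)| ≤ K (t-s)^H √(log(1/(t-s)))` for `0 < t-s ≤ h*`, then there are `C > 0` and
`N₀`, depending only on `H, γ, T, h*`, such that for all `n ≥ N₀` the γ-Hölder norm (sup norm
plus γ-Hölder seminorm on `[0,T]`) of `f^n - f` is at most `C K √(log n) n^{-(H-γ)}`. -/
theorem interpolation_holder_error (m : ℕ) (H γ T hstar : ℝ)
    (hH0 : 0 < H) (hH1 : H ≤ 1) (hγ0 : 0 ≤ γ) (hγH : γ < H) (hT : 0 < T)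
    (hhs1 : 0 < hstar) (hhs2 : hstar ≤ min T (Real.exp (-1))) :
    ∃ C : ℝ, 0 < C ∧ ∃ N₀ : ℕ,
      ∀ K : ℝ, 0 ≤ K →
      ∀ f : ℝ → Vec m, ContinuousOn f (Icc 0 T) →
        (∀ s t : ℝ, 0 ≤ s → s < t → t ≤ T → t - s ≤ hstar →
          ‖f t - f s‖ ≤ K * (t - s) ^ H * Real.sqrt (Real.log (1 / (t - s)))) →
      ∀ n : ℕ, N₀ ≤ n →
        supENorm 0 T (fun t => interp T n f t - f t) +
            holderENorm γ 0 T (fun t => interp T n f t - f t) ≤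
          ENNReal.ofReal
            (C * K * Real.sqrt (Real.log n) * (n : ℝ) ^ (-(H - γ))) := by
  have hC1 : (0:ℝ) < 2 + 1/Real.sqrt (H-γ) := by positivity
  have hD1 : (1:ℝ) ≤ 1 + Real.sqrt (max 0 (-Real.log T)) := by
    nlinarith [Real.sqrt_nonneg (max 0 (-Real.log T))]
  have hD0 : (0:ℝ) < 1 + Real.sqrt (max 0 (-Real.log T)) := lt_of_lt_of_le one_pos hD1
  refine ⟨(2 + 1/Real.sqrt (H-γ)) * (1 + Real.sqrt (max 0 (-Real.log T)))
      * (T ^ H + 2 * T ^ (H-γ)), ?_, max 3 (Nat.ceil (T/hstar)), ?_⟩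
  · have h1 : (0:ℝ) < T ^ H := Real.rpow_pos_of_pos hT H
    have h2 : (0:ℝ) < T ^ (H-γ) := Real.rpow_pos_of_pos hT (H-γ)
    have := mul_pos hC1 hD0
    nlinarith
  intro K hK f hfc hf n hn
  have hn3 : 3 ≤ n := le_trans (le_max_left _ _) hn
  have hn0 : 0 < n := lt_of_lt_of_le (by norm_num) hn3
  have hn' : (0:ℝ) < n := Nat.cast_pos.2 hn0
  have hn3' : (3:ℝ) ≤ n := by exact_mod_cast hn3
  have hn1 : (1:ℝ) ≤ n := by linarith
  have hh : (0:ℝ) < T/n := div_pos hT hn'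
  have hhs : T/n ≤ hstar := by
    have hceil : (Nat.ceil (T/hstar) : ℝ) ≤ n := by
      exact_mod_cast le_trans (le_max_right 3 (Nat.ceil (T/hstar))) hn
    have h1 : T/hstar ≤ (n:ℝ) := le_trans (Nat.le_ceil _) hceil
    rw [div_le_iff₀ hhs1] at h1
    rw [div_le_iff₀ hn']
    linarith
  have hhe : T/n ≤ Real.exp (-1) := hhs.trans (le_trans hhs2 (min_le_right _ _))
  have hlog1 : 1 ≤ Real.log n := by
    rw [Real.le_log_iff_exp_le hn']
    nlinarith [Real.exp_one_lt_d9]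
  have hsq1 : 1 ≤ Real.sqrt (Real.log n) := by
    rw [show (1:ℝ) = Real.sqrt 1 from (Real.sqrt_one).symm]
    exact Real.sqrt_le_sqrt hlog1
  have hsq0 : 0 ≤ Real.sqrt (Real.log n) := Real.sqrt_nonneg _
  have hX0 : 0 ≤ (T/n) ^ (H-γ) * Real.sqrt (Real.log (1/(T/n))) := by positivity
  have hC1K : 0 ≤ (2 + 1/Real.sqrt (H-γ)) * K := mul_nonneg hC1.le hK
  -- comparing sqrt(log(1/(T/n))) with sqrt(log n)
  have hL : Real.sqrt (Real.log (1/(T/n))) ≤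
      Real.sqrt (Real.log n) * (1 + Real.sqrt (max 0 (-Real.log T))) := by
    have e1 : Real.log (1/(T/n)) = Real.log n - Real.log T := by
      rw [one_div_div, Real.log_div hn'.ne' hT.ne']
    have e2 : Real.log n - Real.log T ≤ Real.log n + max 0 (-Real.log T) := by
      have := le_max_right (0:ℝ) (-Real.log T)
      linarith
    calc Real.sqrt (Real.log (1/(T/n))) ≤ Real.sqrt (Real.log n + max 0 (-Real.log T)) := by
          rw [e1]; exact Real.sqrt_le_sqrt e2
    _ ≤ Real.sqrt (Real.log n) + Real.sqrt (max 0 (-Real.log T)) :=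
          my_sqrt_add_le _ _ (by linarith) (le_max_left _ _)
    _ ≤ Real.sqrt (Real.log n) * (1 + Real.sqrt (max 0 (-Real.log T))) := by
          have := mul_le_mul_of_nonneg_right hsq1 (Real.sqrt_nonneg (max 0 (-Real.log T)))
          nlinarith
  -- monotonicity helper
  have mono : ∀ a b : ℝ, 0 ≤ a → a ≤ b →
      (2 + 1/Real.sqrt (H-γ)) * K * a ^ γ * ((T/n) ^ (H-γ) * Real.sqrt (Real.log (1/(T/n)))) ≤
      (2 + 1/Real.sqrt (H-γ)) * K * b ^ γ * ((T/n) ^ (H-γ) * Real.sqrt (Real.log (1/(T/n)))) := by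
    intro a b ha hab
    exact mul_le_mul_of_nonneg_right
      (mul_le_mul_of_nonneg_left (Real.rpow_le_rpow ha hab hγ0) hC1K) hX0
  -- sup bound
  have supb : ∀ t : ℝ, 0 ≤ t → t ≤ T → ‖interp T n f t - f t‖ ≤
      (2 + 1/Real.sqrt (H-γ)) * K * (T/n) ^ γ *
        ((T/n) ^ (H-γ) * Real.sqrt (Real.log (1/(T/n)))) := by
    intro t ht0 htT
    obtain ⟨k, hkn, hk1, hk2⟩ := exists_cell T n hT hn0 t ht0 htT
    have hg0 : interp T n f ((k:ℝ)*(T/n)) - f ((k:ℝ)*(T/n)) = 0 := by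
      rw [interp_grid T n hT hn0 f k, sub_self]
    have hRHS0 : 0 ≤ (2 + 1/Real.sqrt (H-γ)) * K * (T/n) ^ γ *
        ((T/n) ^ (H-γ) * Real.sqrt (Real.log (1/(T/n)))) :=
      mul_nonneg (mul_nonneg hC1K (Real.rpow_nonneg hh.le γ)) hX0
    rcases eq_or_lt_of_le hk1 with he | hlt
    · rw [← he, hg0, norm_zero]
      exact hRHS0
    · have hb := cell_bound H γ T hstar K f hH0 hH1 hγ0 hγH hT hK hf n hn0 hhs hhe
        k hkn ((k:ℝ)*(T/n)) t (le_refl _) hlt hk2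
      rw [hg0, sub_zero] at hb
      refine le_trans hb (mono _ _ (by linarith) (by nlinarith))
  -- Hölder bound
  have holb : ∀ s t : ℝ, 0 ≤ s → s < t → t ≤ T →
      ‖(interp T n f t - f t) - (interp T n f s - f s)‖ ≤
        2 * ((2 + 1/Real.sqrt (H-γ)) * K * (t-s) ^ γ *
          ((T/n) ^ (H-γ) * Real.sqrt (Real.log (1/(T/n))))) := by
    intro s t hs0 hst htT
    have hts0 : 0 < t - s := sub_pos.2 hst
    have htermnn : 0 ≤ (2 + 1/Real.sqrt (H-γ)) * K * (t-s) ^ γ *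
        ((T/n) ^ (H-γ) * Real.sqrt (Real.log (1/(T/n)))) :=
      mul_nonneg (mul_nonneg hC1K (Real.rpow_nonneg hts0.le γ)) hX0
    by_cases hcase : T/n ≤ t - s
    · have h1 := supb t (by linarith) htT
      have h2 := supb s hs0 (by linarith)
      have h3 := mono (T/n) (t-s) hh.le hcase
      calc ‖(interp T n f t - f t) - (interp T n f s - f s)‖
          ≤ ‖interp T n f t - f t‖ + ‖interp T n f s - f s‖ := norm_sub_le _ _
      _ ≤ 2 * ((2 + 1/Real.sqrt (H-γ)) * K * (t-s) ^ γ *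
          ((T/n) ^ (H-γ) * Real.sqrt (Real.log (1/(T/n))))) := by linarith
    · push_neg at hcase
      obtain ⟨k, hkn, hk1, hk2⟩ := exists_cell T n hT hn0 s hs0 (by linarith)
      by_cases hc2 : t ≤ ((k:ℝ)+1)*(T/n)
      · have hb := cell_bound H γ T hstar K f hH0 hH1 hγ0 hγH hT hK hf n hn0 hhs hhe
          k hkn s t hk1 hst hc2
        linarith
      · push_neg at hc2
        have hcast : (((k+1:ℕ)):ℝ) = (k:ℝ)+1 := by push_cast; ring
        have hk2n : k+1 < n := by
          have hTn : (n:ℝ) * (T/n) = T := by field_simp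
          have : ((k:ℝ)+1) * (T/n) < (n:ℝ) * (T/n) := by
            calc ((k:ℝ)+1) * (T/n) < t := hc2
            _ ≤ T := htT
            _ = (n:ℝ) * (T/n) := hTn.symm
          have h4 : ((k:ℝ)+1) < n := lt_of_mul_lt_mul_right this hh.le
          exact_mod_cast (by push_cast; exact h4 : ((k+1:ℕ):ℝ) < (n:ℝ))
        rcases eq_or_lt_of_le hk2 with he | hsu
        · -- s is exactly the grid point (k+1)(T/n); use cell k+1
          have hb := cell_bound H γ T hstar K f hH0 hH1 hγ0 hγH hT hK hf n hn0 hhs hhe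
            (k+1) hk2n s t (le_of_eq (by rw [hcast, he])) hst
            (by rw [hcast]; nlinarith)
          linarith
        · -- s < u < t with u = (k+1)(T/n); split
          have hb1 := cell_bound H γ T hstar K f hH0 hH1 hγ0 hγH hT hK hf n hn0 hhs hhe
            k hkn s (((k:ℝ)+1)*(T/n)) hk1 hsu (le_refl _)
          have hb2 := cell_bound H γ T hstar K f hH0 hH1 hγ0 hγH hT hK hf n hn0 hhs hhe
            (k+1) hk2n (((k:ℝ)+1)*(T/n)) t (le_of_eq (by rw [hcast])) hc2
            (by rw [hcast]; nlinarith)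
          have m1 := mono (t - ((k:ℝ)+1)*(T/n)) (t-s) (by linarith) (by linarith)
          have m2 := mono (((k:ℝ)+1)*(T/n) - s) (t-s) (by linarith) (by linarith)
          have hsplit : (interp T n f t - f t) - (interp T n f s - f s)
              = ((interp T n f t - f t) - (interp T n f (((k:ℝ)+1)*(T/n)) - f (((k:ℝ)+1)*(T/n))))
                + ((interp T n f (((k:ℝ)+1)*(T/n)) - f (((k:ℝ)+1)*(T/n)))
                  - (interp T n f s - f s)) := by abel
          calc ‖(interp T n f t - f t) - (interp T n f s - f s)‖
              = ‖((interp T n f t - f t) - (interp T n f (((k:ℝ)+1)*(T/n)) - f (((k:ℝ)+1)*(T/n))))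
                + ((interp T n f (((k:ℝ)+1)*(T/n)) - f (((k:ℝ)+1)*(T/n)))
                  - (interp T n f s - f s))‖ := by rw [← hsplit]
          _ ≤ ‖(interp T n f t - f t) - (interp T n f (((k:ℝ)+1)*(T/n)) - f (((k:ℝ)+1)*(T/n)))‖
              + ‖(interp T n f (((k:ℝ)+1)*(T/n)) - f (((k:ℝ)+1)*(T/n))) - (interp T n f s - f s)‖ :=
              norm_add_le _ _
          _ ≤ 2 * ((2 + 1/Real.sqrt (H-γ)) * K * (t-s) ^ γ *
              ((T/n) ^ (H-γ) * Real.sqrt (Real.log (1/(T/n))))) := by linarith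
  -- translate to ENNReal and finish
  have hA0 : 0 ≤ (2 + 1/Real.sqrt (H-γ)) * K * (T/n) ^ γ *
      ((T/n) ^ (H-γ) * Real.sqrt (Real.log (1/(T/n)))) :=
    mul_nonneg (mul_nonneg hC1K (Real.rpow_nonneg hh.le γ)) hX0
  have hB0 : 0 ≤ 2 * ((2 + 1/Real.sqrt (H-γ)) * K *
      ((T/n) ^ (H-γ) * Real.sqrt (Real.log (1/(T/n))))) :=
    mul_nonneg (by norm_num) (mul_nonneg hC1K hX0)
  have hsup : supENorm 0 T (fun t => interp T n f t - f t) ≤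
      ENNReal.ofReal ((2 + 1/Real.sqrt (H-γ)) * K * (T/n) ^ γ *
        ((T/n) ^ (H-γ) * Real.sqrt (Real.log (1/(T/n))))) := by
    apply iSup_le
    rintro ⟨t, ht0, htT⟩
    exact ENNReal.ofReal_le_ofReal (supb t ht0 htT)
  have hhol : holderENorm γ 0 T (fun t => interp T n f t - f t) ≤
      ENNReal.ofReal (2 * ((2 + 1/Real.sqrt (H-γ)) * K *
        ((T/n) ^ (H-γ) * Real.sqrt (Real.log (1/(T/n)))))) := by
    apply iSup_le
    rintro ⟨⟨s, t⟩, hs0, hst, htT⟩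
    apply ENNReal.ofReal_le_ofReal
    rw [div_le_iff₀ (Real.rpow_pos_of_pos (sub_pos.2 hst) γ)]
    calc ‖(interp T n f t - f t) - (interp T n f s - f s)‖
        ≤ 2 * ((2 + 1/Real.sqrt (H-γ)) * K * (t-s) ^ γ *
          ((T/n) ^ (H-γ) * Real.sqrt (Real.log (1/(T/n))))) := holb s t hs0 hst htT
    _ = 2 * ((2 + 1/Real.sqrt (H-γ)) * K *
          ((T/n) ^ (H-γ) * Real.sqrt (Real.log (1/(T/n))))) * (t-s) ^ γ := by ring
  -- real-number comparison of the two bounds with the final bound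
  have e2 : (T/n) ^ H ≤ T ^ H * (n:ℝ) ^ (-(H-γ)) := by
    rw [Real.div_rpow hT.le hn'.le, div_eq_mul_inv, ← Real.rpow_neg hn'.le]
    exact mul_le_mul_of_nonneg_left
      (Real.rpow_le_rpow_of_exponent_le hn1 (by linarith)) (Real.rpow_nonneg hT.le H)
  have e3 : (T/n) ^ (H-γ) ≤ T ^ (H-γ) * (n:ℝ) ^ (-(H-γ)) := by
    rw [Real.div_rpow hT.le hn'.le, div_eq_mul_inv, ← Real.rpow_neg hn'.le]
  have hfinalA : (2 + 1/Real.sqrt (H-γ)) * K * (T/n) ^ γ *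
      ((T/n) ^ (H-γ) * Real.sqrt (Real.log (1/(T/n)))) ≤
      (2 + 1/Real.sqrt (H-γ)) * (1 + Real.sqrt (max 0 (-Real.log T))) * T ^ H *
        (K * Real.sqrt (Real.log n) * (n:ℝ) ^ (-(H-γ))) := by
    have e1 : (T/n) ^ γ * (T/n) ^ (H-γ) = (T/n) ^ H := by
      rw [← Real.rpow_add hh]; ring_nf
    have step : (T/n) ^ H * Real.sqrt (Real.log (1/(T/n))) ≤
        (T ^ H * (n:ℝ) ^ (-(H-γ))) * (Real.sqrt (Real.log n) *
          (1 + Real.sqrt (max 0 (-Real.log T)))) :=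
      mul_le_mul e2 hL (Real.sqrt_nonneg _) (by positivity)
    calc (2 + 1/Real.sqrt (H-γ)) * K * (T/n) ^ γ *
        ((T/n) ^ (H-γ) * Real.sqrt (Real.log (1/(T/n))))
        = (2 + 1/Real.sqrt (H-γ)) * K * ((T/n) ^ H * Real.sqrt (Real.log (1/(T/n)))) := by
          rw [← e1]; ring
    _ ≤ (2 + 1/Real.sqrt (H-γ)) * K * ((T ^ H * (n:ℝ) ^ (-(H-γ))) *
          (Real.sqrt (Real.log n) * (1 + Real.sqrt (max 0 (-Real.log T))))) :=
          mul_le_mul_of_nonneg_left step hC1K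
    _ = (2 + 1/Real.sqrt (H-γ)) * (1 + Real.sqrt (max 0 (-Real.log T))) * T ^ H *
        (K * Real.sqrt (Real.log n) * (n:ℝ) ^ (-(H-γ))) := by ring
  have hfinalB : 2 * ((2 + 1/Real.sqrt (H-γ)) * K *
      ((T/n) ^ (H-γ) * Real.sqrt (Real.log (1/(T/n))))) ≤
      (2 + 1/Real.sqrt (H-γ)) * (1 + Real.sqrt (max 0 (-Real.log T))) * (2 * T ^ (H-γ)) *
        (K * Real.sqrt (Real.log n) * (n:ℝ) ^ (-(H-γ))) := by
    have step : (T/n) ^ (H-γ) * Real.sqrt (Real.log (1/(T/n))) ≤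
        (T ^ (H-γ) * (n:ℝ) ^ (-(H-γ))) * (Real.sqrt (Real.log n) *
          (1 + Real.sqrt (max 0 (-Real.log T)))) :=
      mul_le_mul e3 hL (Real.sqrt_nonneg _) (by positivity)
    calc 2 * ((2 + 1/Real.sqrt (H-γ)) * K *
        ((T/n) ^ (H-γ) * Real.sqrt (Real.log (1/(T/n)))))
        ≤ 2 * ((2 + 1/Real.sqrt (H-γ)) * K * ((T ^ (H-γ) * (n:ℝ) ^ (-(H-γ))) *
          (Real.sqrt (Real.log n) * (1 + Real.sqrt (max 0 (-Real.log T)))))) := by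
          have := mul_le_mul_of_nonneg_left step hC1K
          linarith
    _ = (2 + 1/Real.sqrt (H-γ)) * (1 + Real.sqrt (max 0 (-Real.log T))) * (2 * T ^ (H-γ)) *
        (K * Real.sqrt (Real.log n) * (n:ℝ) ^ (-(H-γ))) := by ring
  calc supENorm 0 T (fun t => interp T n f t - f t) +
      holderENorm γ 0 T (fun t => interp T n f t - f t)
      ≤ ENNReal.ofReal ((2 + 1/Real.sqrt (H-γ)) * K * (T/n) ^ γ *
          ((T/n) ^ (H-γ) * Real.sqrt (Real.log (1/(T/n))))) +
        ENNReal.ofReal (2 * ((2 + 1/Real.sqrt (H-γ)) * K *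
          ((T/n) ^ (H-γ) * Real.sqrt (Real.log (1/(T/n)))))) := add_le_add hsup hhol
  _ = ENNReal.ofReal ((2 + 1/Real.sqrt (H-γ)) * K * (T/n) ^ γ *
          ((T/n) ^ (H-γ) * Real.sqrt (Real.log (1/(T/n)))) +
        2 * ((2 + 1/Real.sqrt (H-γ)) * K *
          ((T/n) ^ (H-γ) * Real.sqrt (Real.log (1/(T/n)))))) :=
      (ENNReal.ofReal_add hA0 hB0).symm
  _ ≤ ENNReal.ofReal ((2 + 1/Real.sqrt (H-γ)) * (1 + Real.sqrt (max 0 (-Real.log T)))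
        * (T ^ H + 2 * T ^ (H-γ)) * K * Real.sqrt (Real.log n) * (n : ℝ) ^ (-(H - γ))) := by
      apply ENNReal.ofReal_le_ofReal
      nlinarith [hfinalA, hfinalB]

end
end

section
/- A discrete Hölder bound on grid points lifts to the piecewise linear interpolation (from the proof of Proposition 4.5): Let 0 < γ ≤ 1, T > 0, n ∈ ℕ, and let w : [0,T] → ℝ^d be affine on each interval [kT/n, (k+1)T/n], k = 0,…,n−1. Suppose there is ε ≥ 0 such that |w(qT/n) − w(pT/n)| ≤ ε ((q−p)T/n)^γ for all 0 ≤ p ≤ q ≤ n. Then there is a constant C_γ, depending only on γ, such that |w(t) − w(s)| ≤ C_γ ε (t−s)^γ for all 0 ≤ s ≤ t ≤ T. -/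
open Set

noncomputable section

/-- **A discrete Hölder bound on grid points lifts to the piecewise linear interpolation.**
Let `w : [0,T] → ℝ^d` be affine on each interval `[kT/n, (k+1)T/n]` and suppose
`|w(qT/n) - w(pT/n)| ≤ ε ((q-p)T/n)^γ` for all `0 ≤ p ≤ q ≤ n`. Then there is a constant
`C_γ`, depending only on `γ`, with `|w(t) - w(s)| ≤ C_γ ε (t-s)^γ` for all `0 ≤ s ≤ t ≤ T`. -/
theorem discrete_holder_lifts (γ : ℝ) (hγ0 : 0 < γ) (hγ1 : γ ≤ 1) :
    ∃ C : ℝ, 0 < C ∧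
      ∀ (d : ℕ) (T : ℝ), 0 < T →
      ∀ n : ℕ, 0 < n →
      ∀ w : ℝ → EuclideanSpace ℝ (Fin d),
        (∀ k : ℕ, k < n →
          ∀ t ∈ Icc ((k : ℝ) * T / n) (((k : ℝ) + 1) * T / n),
            w t = w ((k : ℝ) * T / n) +
              ((t - (k : ℝ) * T / n) / (T / n)) •
                (w (((k : ℝ) + 1) * T / n) - w ((k : ℝ) * T / n))) →
      ∀ ε : ℝ, 0 ≤ ε →
        (∀ p q : ℕ, p ≤ q → q ≤ n →
          ‖w ((q : ℝ) * T / n) - w ((p : ℝ) * T / n)‖ ≤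
            ε * (((q : ℝ) - (p : ℝ)) * T / n) ^ γ) →
      ∀ s t : ℝ, 0 ≤ s → s ≤ t → t ≤ T →
        ‖w t - w s‖ ≤ C * ε * (t - s) ^ γ := by
  refine ⟨3, by norm_num, ?_⟩
  intro d T hT n hn w haff ε hε hd s t hs hst htT
  have hn0 : (0:ℝ) < n := by exact_mod_cast hn
  have hhpos : (0:ℝ) < T / n := div_pos hT hn0
  -- within-interval estimate
  have key : ∀ k : ℕ, k < n → ∀ a b : ℝ,
      (k:ℝ) * T / n ≤ a → a ≤ b → b ≤ ((k:ℝ)+1) * T / n →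
      ‖w b - w a‖ ≤ ε * (b - a) ^ γ := by
    intro k hk a b ha hab hb
    have haI : a ∈ Icc ((k:ℝ)*T/n) (((k:ℝ)+1)*T/n) := ⟨ha, hab.trans hb⟩
    have hbI : b ∈ Icc ((k:ℝ)*T/n) (((k:ℝ)+1)*T/n) := ⟨ha.trans hab, hb⟩
    have hwd : w b - w a
        = ((b - a)/(T/n)) • (w (((k:ℝ)+1)*T/n) - w ((k:ℝ)*T/n)) := by
      rw [haff k hk b hbI, haff k hk a haI, add_sub_add_left_eq_sub, ← sub_smul,
        div_sub_div_same, sub_sub_sub_cancel_right]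
    have hΔ : ‖w (((k:ℝ)+1)*T/n) - w ((k:ℝ)*T/n)‖ ≤ ε * (T/n) ^ γ := by
      have h1 := hd k (k+1) (Nat.le_succ k) hk
      push_cast at h1
      have h2 : ((k:ℝ) + 1 - (k:ℝ)) * T / n = T / n := by ring
      rwa [h2] at h1
    have hba : (0:ℝ) ≤ b - a := sub_nonneg.2 hab
    have hkk : ((k:ℝ)+1)*T/n = (k:ℝ)*T/n + T/n := by ring
    have h2 : (b - a)/(T/n) ≤ 1 := (div_le_one hhpos).2 (by linarith)
    have h1 : 0 ≤ (b - a)/(T/n) := div_nonneg hba hhpos.le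
    have hx : (b - a)/(T/n) ≤ ((b - a)/(T/n)) ^ γ := by
      rcases eq_or_lt_of_le h1 with h0 | h0
      · rw [← h0, Real.zero_rpow hγ0.ne']
      · have := Real.rpow_le_rpow_of_exponent_ge h0 h2 hγ1
        rwa [Real.rpow_one] at this
    rw [hwd, norm_smul, Real.norm_eq_abs, abs_of_nonneg h1]
    calc (b - a)/(T/n) * ‖w (((k:ℝ)+1)*T/n) - w ((k:ℝ)*T/n)‖
        ≤ ((b - a)/(T/n)) ^ γ * (ε * (T/n) ^ γ) :=
          mul_le_mul hx hΔ (norm_nonneg _) (Real.rpow_nonneg h1 γ)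
      _ = ε * (b - a) ^ γ := by
          rw [Real.div_rpow hba hhpos.le]
          have hne : (T/n) ^ γ ≠ 0 := (Real.rpow_pos_of_pos hhpos γ).ne'
          field_simp
  -- grid point location
  have grid : ∀ u : ℝ, 0 ≤ u → u ≤ T →
      ((min ⌊u / (T/n)⌋₊ (n-1) : ℕ) : ℝ) * T / n ≤ u ∧
      u ≤ (((min ⌊u / (T/n)⌋₊ (n-1) : ℕ) : ℝ) + 1) * T / n := by
    intro u hu huT
    constructor
    · have h1 : ((min ⌊u/(T/n)⌋₊ (n-1) : ℕ):ℝ) ≤ u / (T/n) :=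
        le_trans (by exact_mod_cast Nat.cast_le.mpr (min_le_left _ _) :
          ((min ⌊u/(T/n)⌋₊ (n-1) : ℕ):ℝ) ≤ (⌊u/(T/n)⌋₊ : ℝ))
          (Nat.floor_le (div_nonneg hu hhpos.le))
      rw [mul_div_assoc]
      exact (le_div_iff₀ hhpos).mp h1
    · rcases le_or_gt ⌊u/(T/n)⌋₊ (n-1) with hc | hc
      · rw [min_eq_left hc]
        have h1 : u / (T/n) < (⌊u/(T/n)⌋₊ : ℝ) + 1 := Nat.lt_floor_add_one _
        have h2 := (div_lt_iff₀ hhpos).mp h1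
        rw [mul_div_assoc]
        linarith
      · rw [min_eq_right hc.le]
        have h1 : ((n-1 : ℕ):ℝ) + 1 = (n:ℝ) := by
          have := Nat.succ_pred_eq_of_pos hn
          exact_mod_cast this
        rw [h1]
        have h2 : (n:ℝ) * T / n = T := by field_simp
        linarith
  set k := min ⌊s/(T/n)⌋₊ (n-1) with hkdef
  set m := min ⌊t/(T/n)⌋₊ (n-1) with hmdef
  obtain ⟨hks, hsk⟩ := grid s hs (hst.trans htT)
  obtain ⟨hmt, htm⟩ := grid t (hs.trans hst) htT
  rw [← hkdef] at hks hsk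
  rw [← hmdef] at hmt htm
  have hn1 : n - 1 < n := Nat.pred_lt hn.ne'
  have hkn : k < n := lt_of_le_of_lt (min_le_right _ _) hn1
  have hmn : m < n := lt_of_le_of_lt (min_le_right _ _) hn1
  have hkm : k ≤ m := by
    apply min_le_min _ le_rfl
    apply Nat.floor_le_floor
    gcongr
  have hts : (0:ℝ) ≤ t - s := sub_nonneg.2 hst
  have hpow : 0 ≤ ε * (t - s) ^ γ := mul_nonneg hε (Real.rpow_nonneg hts γ)
  rcases eq_or_lt_of_le hkm with heq | hlt
  · have := key k hkn s t hks hst (by rw [heq]; exact htm)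
    linarith
  · have hk1m : (k:ℕ) + 1 ≤ m := hlt
    have hk1mR : ((k:ℝ)+1) * T / n ≤ (m:ℝ) * T / n := by
      have : ((k:ℝ)+1) ≤ (m:ℝ) := by exact_mod_cast hk1m
      gcongr
    have hsm : s ≤ (m:ℝ) * T / n := hsk.trans hk1mR
    have hk1t : ((k:ℝ)+1) * T / n ≤ t := hk1mR.trans hmt
    -- three pieces
    have t1 : ‖w t - w ((m:ℝ)*T/n)‖ ≤ ε * (t - (m:ℝ)*T/n) ^ γ :=
      key m hmn ((m:ℝ)*T/n) t le_rfl hmt htm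
    have t3 : ‖w (((k:ℝ)+1)*T/n) - w s‖ ≤ ε * (((k:ℝ)+1)*T/n - s) ^ γ :=
      key k hkn s (((k:ℝ)+1)*T/n) hks hsk le_rfl
    have t2 : ‖w ((m:ℝ)*T/n) - w (((k:ℝ)+1)*T/n)‖
        ≤ ε * (((m:ℝ) - ((k:ℝ)+1)) * T / n) ^ γ := by
      have := hd (k+1) m hk1m hmn.le
      push_cast at this
      exact this
    have b1 : ε * (t - (m:ℝ)*T/n) ^ γ ≤ ε * (t - s) ^ γ := by
      apply mul_le_mul_of_nonneg_left _ hε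
      apply Real.rpow_le_rpow (by linarith) (by linarith) hγ0.le
    have b3 : ε * (((k:ℝ)+1)*T/n - s) ^ γ ≤ ε * (t - s) ^ γ := by
      apply mul_le_mul_of_nonneg_left _ hε
      apply Real.rpow_le_rpow (by linarith) (by linarith) hγ0.le
    have b2 : ε * (((m:ℝ) - ((k:ℝ)+1)) * T / n) ^ γ ≤ ε * (t - s) ^ γ := by
      apply mul_le_mul_of_nonneg_left _ hε
      apply Real.rpow_le_rpow
      · have : ((k:ℝ)+1) ≤ (m:ℝ) := by exact_mod_cast hk1m
        have h0 : 0 ≤ (m:ℝ) - ((k:ℝ)+1) := by linarith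
        positivity
      · have hx : ((m:ℝ) - ((k:ℝ)+1)) * T / n = (m:ℝ)*T/n - ((k:ℝ)+1)*T/n := by ring
        rw [hx]
        linarith
      · exact hγ0.le
    have tri : ‖w t - w s‖ ≤ ‖w t - w ((m:ℝ)*T/n)‖
        + ‖w ((m:ℝ)*T/n) - w (((k:ℝ)+1)*T/n)‖
        + ‖w (((k:ℝ)+1)*T/n) - w s‖ := by
      have heq : w t - w s = (w t - w ((m:ℝ)*T/n))
          + (w ((m:ℝ)*T/n) - w (((k:ℝ)+1)*T/n))
          + (w (((k:ℝ)+1)*T/n) - w s) := by abel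
      rw [heq]
      exact norm_add₃_le
    linarith

end
end
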